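/- arXiv:2206.08580 — 4 statements merged into one kernel-verified Lean document; each statement's English description precedes it below -/
import Mathlib

section
/- Let m ≥ 3 and k ≥ 1, and write λ = 2k. The number of proper colorings of the signed graph B_m^1 with color set {−k,…,−1,1,…,k} equals λ·(λ−2)·γ_m(λ). -/
/-- Vertices of the book graph `B(m,n)`: `Sum.inl false` is `u`, `Sum.inl true` is `v`,
and `Sum.inr (i, j)` is the vertex `u_{j+1}^{i+1}`. -/
abbrev BookVertex (m n : ℕ) := Bool ⊕ (Fin n × Fin (m - 2))

/-- Adjacency relation of the book graph `B(m,n)`. -/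
def bookAdj (m n : ℕ) : BookVertex m n → BookVertex m n → Prop
  | Sum.inl a, Sum.inl b => a ≠ b
  | Sum.inl false, Sum.inr (_, j) => j.val = 0
  | Sum.inl true, Sum.inr (_, j) => j.val = m - 3
  | Sum.inr (_, j), Sum.inl false => j.val = 0
  | Sum.inr (_, j), Sum.inl true => j.val = m - 3
  | Sum.inr (i, j), Sum.inr (i', j') => i = i' ∧ (j.val + 1 = j'.val ∨ j'.val + 1 = j.val)

/-- The signature `σ_l` of `B(m,n)`: exactly the edges `u u_1^1, …, u u_1^l` are negative. -/
def sigmaL (m n l : ℕ) : BookVertex m n → BookVertex m n → ℤ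
  | Sum.inl false, Sum.inr (i, j) => if j.val = 0 ∧ i.val < l then -1 else 1
  | Sum.inr (i, j), Sum.inl false => if j.val = 0 ∧ i.val < l then -1 else 1
  | _, _ => 1

/-- The signature of `B^{uv}(m,n)`: exactly the edge `uv` is negative. -/
def sigmaUV (m n : ℕ) : BookVertex m n → BookVertex m n → ℤ
  | Sum.inl _, Sum.inl _ => -1
  | _, _ => 1

/-- `γ_m(x) = ∑_{i=0}^{m-2} (-1)^i (x-1)^{m-2-i}`. -/
def gammaP (m : ℕ) (x : ℤ) : ℤ := ∑ i ∈ Finset.range (m - 1), (-1) ^ i * (x - 1) ^ (m - 2 - i)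


section Walks
variable {T : Type} [Fintype T] [DecidableEq T]

def DE (lam : ℕ) : ℕ → ℕ × ℕ
  | 0 => (0, 1)
  | (n+1) => ((lam - 2) * (DE lam n).1 + (DE lam n).2, (lam - 1) * (DE lam n).1)

def wk (T : Type) [Fintype T] [DecidableEq T] (ℓ : ℕ) (a b : T) : Type :=
  {f : Fin (ℓ+1) → T // f 0 = a ∧ f (Fin.last ℓ) = b ∧ ∀ i : Fin ℓ, f i.castSucc ≠ f i.succ}

instance (ℓ : ℕ) (a b : T) : Fintype (wk T ℓ a b) := by
  unfold wk; infer_instance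

def wkEquiv (ℓ : ℕ) (a b c : T) (hcb : c ≠ b) :
    {f : wk T (ℓ+1) a b // f.1 ((Fin.last ℓ).castSucc) = c} ≃ wk T ℓ a c where
  toFun f := ⟨Fin.init f.1.1, by
      show f.1.1 (Fin.castSucc 0) = a
      rw [Fin.castSucc_zero]; exact f.1.2.1, f.2, by
      intro i
      show f.1.1 i.castSucc.castSucc ≠ f.1.1 i.succ.castSucc
      rw [← Fin.succ_castSucc]
      exact f.1.2.2.2 i.castSucc⟩
  invFun g := ⟨⟨Fin.snoc g.1 b, by
      have h0 : (0 : Fin (ℓ+2)) = Fin.castSucc 0 := rfl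
      rw [h0, Fin.snoc_castSucc]; exact g.2.1, by
      rw [Fin.snoc_last], by
      intro i
      refine Fin.lastCases ?_ (fun j => ?_) i
      · rw [Fin.succ_last, Fin.snoc_last, Fin.snoc_castSucc, g.2.2.1]
        exact hcb
      · rw [Fin.succ_castSucc, Fin.snoc_castSucc, Fin.snoc_castSucc]
        exact g.2.2.2 j⟩, by
      simp only [Fin.snoc_castSucc]
      exact g.2.2.1⟩
  left_inv f := by
    apply Subtype.ext; apply Subtype.ext
    show Fin.snoc (Fin.init f.1.1) b = f.1.1
    have h := Fin.snoc_init_self f.1.1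
    rwa [f.1.2.2.1] at h
  right_inv g := by
    apply Subtype.ext
    simp

lemma card_wk (ℓ : ℕ) (a b : T) :
    Nat.card (wk T ℓ a b) =
      if a = b then (DE (Fintype.card T) ℓ).2 else (DE (Fintype.card T) ℓ).1 := by
  set lam := Fintype.card T with hlam
  induction ℓ generalizing b with
  | zero =>
    by_cases h : a = b
    · subst h
      rw [if_pos rfl]
      have : Unique (wk T 0 a a) := by
        refine ⟨⟨⟨fun _ => a, rfl, rfl, fun i => i.elim0⟩⟩, ?_⟩
        rintro ⟨f, h0, hl, hc⟩
        apply Subtype.ext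
        funext i
        have : i = 0 := Fin.ext (by omega)
        simp [this, h0]
      simp [Nat.card_unique, DE]
    · rw [if_neg h]
      have : IsEmpty (wk T 0 a b) := by
        refine ⟨?_⟩
        rintro ⟨f, h0, hl, hc⟩
        exact h (h0 ▸ hl ▸ rfl)
      simp [DE]
  | succ ℓ ih =>
    have e1 := (Equiv.sigmaFiberEquiv
      (fun f : wk T (ℓ+1) a b => f.1 ((Fin.last ℓ).castSucc))).symm
    rw [Nat.card_congr e1, Nat.card_eq_fintype_card, Fintype.card_sigma]
    have fiber : ∀ c : T, Fintype.card {f : wk T (ℓ+1) a b // f.1 ((Fin.last ℓ).castSucc) = c} =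
        if c = b then 0 else if a = c then (DE lam ℓ).2 else (DE lam ℓ).1 := by
      intro c
      by_cases hcb : c = b
      · rw [if_pos hcb]
        rw [Fintype.card_eq_zero_iff]
        refine ⟨?_⟩
        rintro ⟨⟨f, h0, hl, hc⟩, he⟩
        apply hc (Fin.last ℓ)
        have he' : f ((Fin.last ℓ).castSucc) = c := he
        rw [he', hcb, Fin.succ_last, hl]
      · rw [if_neg hcb, ← Nat.card_eq_fintype_card, Nat.card_congr (wkEquiv ℓ a b c hcb)]
        exact ih c
    rw [Finset.sum_congr rfl (fun c _ => fiber c)]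
    by_cases hab : a = b
    · subst hab
      rw [if_pos rfl]
      rw [← Finset.sum_erase_add _ _ (Finset.mem_univ a), if_pos rfl, add_zero]
      have : ∀ c ∈ Finset.univ.erase a,
          (if c = a then 0 else if a = c then (DE lam ℓ).2 else (DE lam ℓ).1) = (DE lam ℓ).1 := by
        intro c hc
        have h1 : c ≠ a := (Finset.mem_erase.mp hc).1
        rw [if_neg h1, if_neg (fun h => h1 h.symm)]
      rw [Finset.sum_congr rfl this, Finset.sum_const, Finset.card_erase_of_mem (Finset.mem_univ a),
        Finset.card_univ, smul_eq_mul]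
      show (lam - 1) * (DE lam ℓ).1 = (DE lam (ℓ+1)).2
      rfl
    · rw [if_neg hab]
      rw [← Finset.sum_erase_add _ _ (Finset.mem_univ b), if_pos rfl, add_zero]
      have hamem : a ∈ Finset.univ.erase b := Finset.mem_erase.mpr ⟨hab, Finset.mem_univ a⟩
      rw [← Finset.add_sum_erase _ _ hamem, if_neg (fun h : a = b => hab h), if_pos rfl]
      have : ∀ c ∈ (Finset.univ.erase b).erase a,
          (if c = b then 0 else if a = c then (DE lam ℓ).2 else (DE lam ℓ).1) = (DE lam ℓ).1 := by
        intro c hc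
        have h1 : c ≠ a := (Finset.mem_erase.mp hc).1
        have h2 : c ≠ b := (Finset.mem_erase.mp (Finset.mem_erase.mp hc).2).1
        rw [if_neg h2, if_neg (fun h => h1 h.symm)]
      rw [Finset.sum_congr rfl this, Finset.sum_const, smul_eq_mul,
        Finset.card_erase_of_mem hamem, Finset.card_erase_of_mem (Finset.mem_univ b), Finset.card_univ]
      show (DE lam ℓ).2 + (lam - 1 - 1) * (DE lam ℓ).1 = (DE lam (ℓ+1)).1
      have : lam - 1 - 1 = lam - 2 := by omega
      rw [this]
      show (DE lam ℓ).2 + (lam - 2) * (DE lam ℓ).1 = (lam - 2) * (DE lam ℓ).1 + (DE lam ℓ).2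
      omega

end Walks



noncomputable def ColS (k : ℕ) : Finset ℤ := (Finset.Icc (-(k:ℤ)) k).erase 0

lemma mem_ColS {k : ℕ} {x : ℤ} : x ∈ ColS k ↔ x ≠ 0 ∧ |x| ≤ (k:ℤ) := by
  simp [ColS, abs_le, and_comm]

abbrev Col (k : ℕ) := {x : ℤ // x ∈ ColS k}

lemma card_Col (k : ℕ) (hk : 1 ≤ k) : Fintype.card (Col k) = 2 * k := by
  rw [Fintype.card_coe]
  rw [ColS, Finset.card_erase_of_mem (by simp), Int.card_Icc]
  omega

lemma DE_closed (lam : ℕ) (hlam : 2 ≤ lam) : ∀ ℓ : ℕ,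
    ((DE lam ℓ).1 : ℤ) = ∑ i ∈ Finset.range ℓ, (-1)^i * ((lam:ℤ)-1)^(ℓ-1-i) ∧
    ((DE lam ℓ).2 : ℤ) = ((lam:ℤ)-1)^ℓ - ((lam:ℤ)-1) * ((DE lam ℓ).1 : ℤ) := by
  intro ℓ
  induction ℓ with
  | zero => simp [DE]
  | succ ℓ ih =>
    obtain ⟨ih1, ih2⟩ := ih
    have hsum : ∑ i ∈ Finset.range (ℓ+1), (-1:ℤ)^i * ((lam:ℤ)-1)^(ℓ+1-1-i)
        = ((lam:ℤ)-1)^ℓ - ∑ i ∈ Finset.range ℓ, (-1:ℤ)^i * ((lam:ℤ)-1)^(ℓ-1-i) := by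
      rw [Finset.sum_range_succ']
      have : ∀ i ∈ Finset.range ℓ, (-1:ℤ)^(i+1) * ((lam:ℤ)-1)^(ℓ+1-1-(i+1))
          = -((-1:ℤ)^i * ((lam:ℤ)-1)^(ℓ-1-i)) := by
        intro i hi
        have : ℓ + 1 - 1 - (i+1) = ℓ - 1 - i := by omega
        rw [this, pow_succ]
        ring
      rw [Finset.sum_congr rfl this, Finset.sum_neg_distrib]
      simp
      ring
    have hc1 : ((DE lam (ℓ+1)).1 : ℤ) = ((lam:ℤ) - 2) * (DE lam ℓ).1 + (DE lam ℓ).2 := by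
      show ((((lam - 2) * (DE lam ℓ).1 + (DE lam ℓ).2 : ℕ)) : ℤ) = _
      push_cast [Nat.cast_sub (by omega : 2 ≤ lam)]
      ring
    have hc2 : ((DE lam (ℓ+1)).2 : ℤ) = ((lam:ℤ) - 1) * (DE lam ℓ).1 := by
      show ((((lam - 1) * (DE lam ℓ).1 : ℕ)) : ℤ) = _
      push_cast [Nat.cast_sub (by omega : 1 ≤ lam)]
      ring
    constructor
    · rw [hc1, hsum, ih2, ← ih1]; ring
    · rw [hc2, hc1, ih2]; ring



def ev (d : ℕ) (i : Fin (d+3)) : BookVertex (d+3) 1 :=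
  if h0 : i.val = 0 then Sum.inl false
  else if hl : i.val = d+2 then Sum.inl true
  else Sum.inr (0, ⟨i.val - 1, by omega⟩)

def ve (d : ℕ) : BookVertex (d+3) 1 → Fin (d+3)
  | Sum.inl false => 0
  | Sum.inl true => Fin.last (d+2)
  | Sum.inr (_, j) => ⟨j.val + 1, by have := j.isLt; omega⟩

lemma ev_ve (d : ℕ) (x : BookVertex (d+3) 1) : ev d (ve d x) = x := by
  rcases x with a | ⟨i, j⟩
  · cases a <;> simp [ve, ev, Fin.last]
  · have hj := j.isLt
    have hi : i = 0 := Fin.ext (by omega)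
    subst hi
    simp only [ve, ev]
    split_ifs with h1 h2
    · omega
    · simp; omega

lemma ve_ev (d : ℕ) (i : Fin (d+3)) : ve d (ev d i) = i := by
  rcases eq_or_ne i.val 0 with h0 | h0
  · simp only [ev]
    rw [dif_pos h0]
    exact Fin.ext (by simp [ve]; omega)
  · rcases eq_or_ne i.val (d+2) with hl | hl
    · simp only [ev]
      rw [dif_neg h0, dif_pos hl]
      exact Fin.ext (by simp [ve, Fin.last]; omega)
    · simp only [ev]
      rw [dif_neg h0, dif_neg hl]
      exact Fin.ext (by simp [ve]; omega)

lemma ev_zero (d : ℕ) : ev d 0 = Sum.inl false := by simp [ev]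

lemma ev_last (d : ℕ) : ev d (Fin.last (d+2)) = Sum.inl true := by simp [ev, Fin.last]

lemma ev_edge (d : ℕ) (i : Fin (d+2)) :
    bookAdj (d+3) 1 (ev d i.castSucc) (ev d i.succ) ∧
    ¬((ev d i.castSucc = Sum.inl false ∧ ev d i.succ = Sum.inl true) ∨
      (ev d i.castSucc = Sum.inl true ∧ ev d i.succ = Sum.inl false)) := by
  have hi := i.isLt
  have hc : (i.castSucc).val = i.val := rfl
  have hs : (i.succ).val = i.val + 1 := rfl
  rcases eq_or_ne i.val 0 with h0 | h0
  · have e1 : ev d i.castSucc = Sum.inl false := by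
      simp only [ev]; rw [dif_pos (by omega)]
    have e2 : ev d i.succ = Sum.inr (0, ⟨(i.succ).val - 1, by omega⟩) := by
      simp only [ev]; rw [dif_neg (by omega), dif_neg (by omega)]
    rw [e1, e2]
    refine ⟨?_, by simp⟩
    simp only [bookAdj]
    omega
  · rcases eq_or_ne i.val (d+1) with h1 | h1
    · have e1 : ev d i.castSucc = Sum.inr (0, ⟨(i.castSucc).val - 1, by omega⟩) := by
        simp only [ev]; rw [dif_neg (by omega), dif_neg (by omega)]
      have e2 : ev d i.succ = Sum.inl true := by
        simp only [ev]; rw [dif_neg (by omega), dif_pos (by omega)]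
      rw [e1, e2]
      refine ⟨?_, by simp⟩
      simp only [bookAdj]
      omega
    · have e1 : ev d i.castSucc = Sum.inr (0, ⟨(i.castSucc).val - 1, by omega⟩) := by
        simp only [ev]; rw [dif_neg (by omega), dif_neg (by omega)]
      have e2 : ev d i.succ = Sum.inr (0, ⟨(i.succ).val - 1, by omega⟩) := by
        simp only [ev]; rw [dif_neg (by omega), dif_neg (by omega)]
      rw [e1, e2]
      refine ⟨?_, by simp⟩
      simp only [bookAdj]
      exact ⟨trivial, Or.inl (by omega)⟩


lemma hD_lemma (k d : ℕ) (hk : 1 ≤ k) :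
    (((DE (2*k) (d+2)).1 : ℕ) : ℤ) = gammaP (d+3) (2 * (k:ℤ)) := by
  rw [(DE_closed (2*k) (by omega) (d+2)).1, gammaP]
  have h1 : (d+3) - 1 = d + 2 := rfl
  rw [h1]
  refine Finset.sum_congr rfl (fun i hi => ?_)
  have h2 : (d+2) - 1 - i = (d+3) - 2 - i := by omega
  rw [h2]
  push_cast
  ring

lemma count_paths (k d : ℕ) (hk : 1 ≤ k) :
    ((Nat.card {f : Fin (d+3) → Col k //
        (∀ i : Fin (d+2), f i.castSucc ≠ f i.succ) ∧
        f 0 ≠ f (Fin.last (d+2)) ∧ (f 0).1 ≠ -((f (Fin.last (d+2))).1)} : ℕ) : ℤ) =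
      (2 * (k : ℤ)) * (2 * (k : ℤ) - 2) * gammaP (d+3) (2 * (k : ℤ)) := by
  classical
  have h2k : ((2 * k - 2 : ℕ) : ℤ) = 2 * (k:ℤ) - 2 := by omega
  have hD := hD_lemma k d hk
  have hcardT : Fintype.card (Col k) = 2 * k := card_Col k hk
  have inner : ∀ a : Col k, (∑ b : Col k, if a = b ∨ a.1 = -(b.1) then 0 else (DE (2*k) (d+2)).1)
      = (2 * k - 2) * (DE (2*k) (d+2)).1 := by
    intro a
    have ha := mem_ColS.mp a.2
    obtain ⟨na, hnav⟩ : ∃ na : Col k, na.1 = -(a.1) :=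
      ⟨⟨-(a.1), mem_ColS.mpr ⟨by omega, by rw [abs_neg]; exact ha.2⟩⟩, rfl⟩
    have hanena : a ≠ na := by
      intro h
      have h2 := congrArg Subtype.val h
      rw [hnav] at h2
      omega
    have conv : ∀ b : Col k, (if a = b ∨ a.1 = -(b.1) then 0 else (DE (2*k) (d+2)).1)
        = (if b ∈ ({a, na} : Finset (Col k)) then 0 else (DE (2*k) (d+2)).1) := by
      intro b
      have hiff : (a = b ∨ a.1 = -(b.1)) ↔ (b ∈ ({a, na} : Finset (Col k))) := by
        simp only [Finset.mem_insert, Finset.mem_singleton]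
        constructor
        · rintro (h | h)
          · exact Or.inl h.symm
          · refine Or.inr (Subtype.ext ?_)
            rw [hnav]; omega
        · rintro (h | h)
          · exact Or.inl h.symm
          · have h2 := congrArg Subtype.val h
            rw [hnav] at h2
            exact Or.inr (by omega)
      by_cases h : a = b ∨ a.1 = -(b.1)
      · rw [if_pos h, if_pos (hiff.mp h)]
      · rw [if_neg h, if_neg (fun hh => h (hiff.mpr hh))]
    rw [Finset.sum_congr rfl (fun b _ => conv b), Finset.sum_ite, Finset.sum_const_zero,
      Finset.sum_const, zero_add, smul_eq_mul]
    congr 1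
    have hfil : Finset.univ.filter (fun b => ¬ b ∈ ({a, na} : Finset (Col k))) =
        ({a, na} : Finset (Col k))ᶜ := by
      ext b; simp
    rw [hfil, Finset.card_compl, hcardT,
      Finset.card_insert_of_notMem (by simpa using hanena), Finset.card_singleton]
  have hcount : Nat.card {f : Fin (d+3) → Col k //
        (∀ i : Fin (d+2), f i.castSucc ≠ f i.succ) ∧
        f 0 ≠ f (Fin.last (d+2)) ∧ (f 0).1 ≠ -((f (Fin.last (d+2))).1)} =
      2 * k * ((2 * k - 2) * (DE (2*k) (d+2)).1) := by
    rw [Nat.card_congr (Equiv.sigmaFiberEquiv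
        (fun f : {f : Fin (d+3) → Col k //
          (∀ i : Fin (d+2), f i.castSucc ≠ f i.succ) ∧
          f 0 ≠ f (Fin.last (d+2)) ∧ (f 0).1 ≠ -((f (Fin.last (d+2))).1)} =>
          (f.1 0, f.1 (Fin.last (d+2))))).symm,
      Nat.card_eq_fintype_card, Fintype.card_sigma]
    have fiber : ∀ p : Col k × Col k, Fintype.card {f : {f : Fin (d+3) → Col k //
          (∀ i : Fin (d+2), f i.castSucc ≠ f i.succ) ∧
          f 0 ≠ f (Fin.last (d+2)) ∧ (f 0).1 ≠ -((f (Fin.last (d+2))).1)} //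
          (f.1 0, f.1 (Fin.last (d+2))) = p} =
        if p.1 = p.2 ∨ p.1.1 = -(p.2.1) then 0 else (DE (2*k) (d+2)).1 := by
      rintro ⟨a, b⟩
      by_cases hbad : a = b ∨ a.1 = -(b.1)
      · rw [if_pos hbad, Fintype.card_eq_zero_iff]
        refine ⟨?_⟩
        rintro ⟨⟨f, h1, h2, h3⟩, hp⟩
        have hp1 : f 0 = a := congrArg Prod.fst hp
        have hp2 : f (Fin.last (d+2)) = b := congrArg Prod.snd hp
        rcases hbad with hbad | hbad
        · exact h2 (by rw [hp1, hp2, hbad])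
        · exact h3 (by rw [hp1, hp2]; exact hbad)
      · push_neg at hbad
        rw [if_neg (by push_neg; exact hbad)]
        have eqv : {f : {f : Fin (d+3) → Col k //
            (∀ i : Fin (d+2), f i.castSucc ≠ f i.succ) ∧
            f 0 ≠ f (Fin.last (d+2)) ∧ (f 0).1 ≠ -((f (Fin.last (d+2))).1)} //
            (f.1 0, f.1 (Fin.last (d+2))) = (a, b)} ≃ wk (Col k) (d+2) a b := by
          refine { toFun := fun F => ⟨F.1.1, congrArg Prod.fst F.2, congrArg Prod.snd F.2, F.1.2.1⟩,
                   invFun := fun g => ⟨⟨g.1, g.2.2.2, ?_, ?_⟩, ?_⟩,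
                   left_inv := ?_, right_inv := ?_ }
          · rw [g.2.1, g.2.2.1]; exact hbad.1
          · rw [g.2.1, g.2.2.1]; exact hbad.2
          · exact congrArg₂ Prod.mk g.2.1 g.2.2.1
          · intro F; apply Subtype.ext; apply Subtype.ext; rfl
          · intro g; apply Subtype.ext; rfl
        rw [← Nat.card_eq_fintype_card, Nat.card_congr eqv, card_wk, hcardT,
          if_neg hbad.1]
    rw [Finset.sum_congr rfl (fun p _ => fiber p), Fintype.sum_prod_type]
    rw [Finset.sum_congr rfl (fun a _ => inner a), Finset.sum_const, Finset.card_univ,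
      hcardT, smul_eq_mul]
  rw [hcount]
  push_cast [h2k]
  rw [hD]
  ring

/-- With `λ = 2k`, the number of zero-free proper colorings of `B_m^1` (the book graph
`B(m,1)` with the edge `uv` replaced by a digon with one positive and one negative edge)
with color set `{-k, …, -1, 1, …, k}` is `λ(λ-2)·γ_m(λ)`. -/
theorem statement13 (m : ℕ) (hm : 3 ≤ m) (k : ℕ) (hk : 1 ≤ k) :
    (Nat.card {c : BookVertex m 1 → ℤ //
        (∀ x, c x ≠ 0 ∧ |c x| ≤ (k : ℤ)) ∧
        (∀ x y, bookAdj m 1 x y →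
          ¬((x = Sum.inl false ∧ y = Sum.inl true) ∨
            (x = Sum.inl true ∧ y = Sum.inl false)) → c x ≠ c y) ∧
        c (Sum.inl false) ≠ c (Sum.inl true) ∧
        c (Sum.inl false) ≠ - c (Sum.inl true)} : ℤ) =
      (2 * (k : ℤ)) * (2 * (k : ℤ) - 2) * gammaP m (2 * (k : ℤ)) := by
  obtain ⟨d, rfl⟩ : ∃ d, m = d + 3 := ⟨m - 3, by omega⟩
  classical
  have key : Nat.card {c : BookVertex (d+3) 1 → ℤ //
        (∀ x, c x ≠ 0 ∧ |c x| ≤ (k : ℤ)) ∧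
        (∀ x y, bookAdj (d+3) 1 x y →
          ¬((x = Sum.inl false ∧ y = Sum.inl true) ∨
            (x = Sum.inl true ∧ y = Sum.inl false)) → c x ≠ c y) ∧
        c (Sum.inl false) ≠ c (Sum.inl true) ∧
        c (Sum.inl false) ≠ - c (Sum.inl true)} =
      Nat.card {f : Fin (d+3) → Col k //
        (∀ i : Fin (d+2), f i.castSucc ≠ f i.succ) ∧
        f 0 ≠ f (Fin.last (d+2)) ∧ (f 0).1 ≠ -((f (Fin.last (d+2))).1)} := by
    refine Nat.card_congr ?_
    refine { toFun := fun c => ⟨fun i => ⟨c.1 (ev d i), mem_ColS.mpr (c.2.1 _)⟩, ?_, ?_, ?_⟩,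
             invFun := fun f => ⟨fun x => (f.1 (ve d x)).1, ?_, ?_, ?_, ?_⟩,
             left_inv := ?_, right_inv := ?_ }
    · intro i he
      exact c.2.2.1 _ _ (ev_edge d i).1 (ev_edge d i).2 (congrArg Subtype.val he)
    · intro he
      have h : c.1 (ev d 0) = c.1 (ev d (Fin.last (d+2))) := congrArg Subtype.val he
      rw [ev_zero, ev_last] at h
      exact c.2.2.2.1 h
    · show c.1 (ev d 0) ≠ -(c.1 (ev d (Fin.last (d+2))))
      rw [ev_zero, ev_last]
      exact c.2.2.2.2
    · intro x
      exact mem_ColS.mp (f.1 (ve d x)).2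
    · have step : ∀ p q : Fin (d+3), p.val + 1 = q.val → (f.1 p).1 ≠ (f.1 q).1 := by
        intro p q hpq
        have hp : p.val < d+2 := by have := q.isLt; omega
        have h := f.2.1 ⟨p.val, hp⟩
        have hcs : (⟨p.val, hp⟩ : Fin (d+2)).castSucc = p := Fin.ext rfl
        have hsu : (⟨p.val, hp⟩ : Fin (d+2)).succ = q := Fin.ext (by simp; omega)
        rw [hcs, hsu] at h
        exact fun he => h (Subtype.ext he)
      intro x y hadj huv
      rcases x with b | ⟨i, j⟩ <;> rcases y with b' | ⟨i', j'⟩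
      · cases b <;> cases b'
        · exact absurd rfl hadj
        · exact absurd (Or.inl ⟨rfl, rfl⟩) huv
        · exact absurd (Or.inr ⟨rfl, rfl⟩) huv
        · exact absurd rfl hadj
      · cases b
        · have hj : j'.val = 0 := hadj
          exact step (ve d (Sum.inl false)) (ve d (Sum.inr (i', j'))) (by simp [ve]; omega)
        · have hj : j'.val = (d+3) - 3 := hadj
          exact (step (ve d (Sum.inr (i', j'))) (ve d (Sum.inl true)) (by simp [ve, Fin.last]; omega)).symm
      · cases b'
        · have hj : j.val = 0 := hadj
          exact (step (ve d (Sum.inl false)) (ve d (Sum.inr (i, j))) (by simp [ve]; omega)).symm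
        · have hj : j.val = (d+3) - 3 := hadj
          exact step (ve d (Sum.inr (i, j))) (ve d (Sum.inl true)) (by simp [ve, Fin.last]; omega)
      · obtain ⟨hii, hjj⟩ : i = i' ∧ (j.val + 1 = j'.val ∨ j'.val + 1 = j.val) := hadj
        rcases hjj with hjj | hjj
        · exact step (ve d (Sum.inr (i, j))) (ve d (Sum.inr (i', j'))) (by simp [ve]; omega)
        · exact (step (ve d (Sum.inr (i', j'))) (ve d (Sum.inr (i, j))) (by simp [ve]; omega)).symm
    · exact fun he => f.2.2.1 (Subtype.ext he)
    · exact f.2.2.2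
    · intro c
      apply Subtype.ext
      funext x
      show c.1 (ev d (ve d x)) = c.1 x
      rw [ev_ve]
    · intro f
      apply Subtype.ext
      funext i
      apply Subtype.ext
      show (f.1 (ve d (ev d i))).1 = (f.1 i).1
      rw [ve_ev]
  rw [key]
  exact count_paths k d hk
end

section
/- Let m ≥ 3, n ≥ 2 and k ≥ 1, and write λ = 2k. The number of proper colorings of the signed graph B_m^n with color set {−k,…,−1,1,…,k} equals λ·(λ−2)·γ_m(λ)^n. -/


noncomputable def Sk (k : ℕ) : Finset ℤ := (Finset.Icc (-(k:ℤ)) k).erase 0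

lemma mem_Sk {k : ℕ} {x : ℤ} : x ∈ Sk k ↔ x ≠ 0 ∧ |x| ≤ (k : ℤ) := by
  simp [Sk, abs_le, and_comm]

lemma card_Sk (k : ℕ) : (Sk k).card = 2 * k := by
  rw [Sk, Finset.card_erase_of_mem (by simp), Int.card_Icc]; omega

lemma neg_mem_Sk {k : ℕ} {x : ℤ} (h : x ∈ Sk k) : -x ∈ Sk k := by
  rw [mem_Sk] at *; simpa using h

/-- `G y t = ∑_{i=0}^{t} (-1)^i y^{t-i}`. -/
def G (y : ℤ) (t : ℕ) : ℤ := ∑ i ∈ Finset.range (t + 1), (-1) ^ i * y ^ (t - i)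

lemma G_zero (y : ℤ) : G y 0 = 1 := by simp [G]

lemma G_succ (y : ℤ) (t : ℕ) : G y (t + 1) = y ^ (t + 1) - G y t := by
  rw [G, Finset.sum_range_succ', G]
  have : ∀ i ∈ Finset.range (t + 1), (-1:ℤ) ^ (i+1) * y ^ (t + 1 - (i+1)) = -((-1)^i * y^(t-i)) := by
    intro i hi
    have : t + 1 - (i + 1) = t - i := by omega
    rw [this, pow_succ]; ring
  rw [Finset.sum_congr rfl this, Finset.sum_neg_distrib]
  simp
  ring

lemma G_one (y : ℤ) : G y 1 = y - 1 := by rw [G_succ, G_zero]; ring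

/-- Colorings of a path with `ℓ+1` vertices, values in `Sk k`, consecutive distinct,
first value `≠ a`. -/
noncomputable def chainF (k ℓ : ℕ) (a : ℤ) : Finset (Fin (ℓ + 1) → ℤ) :=
  (Fintype.piFinset fun _ => Sk k).filter fun f =>
    f 0 ≠ a ∧ ∀ j : Fin ℓ, f j.castSucc ≠ f j.succ

/-- Additionally the last value is `≠ b`. -/
noncomputable def pathF (k ℓ : ℕ) (a b : ℤ) : Finset (Fin (ℓ + 1) → ℤ) :=
  (chainF k ℓ a).filter fun f => f (Fin.last ℓ) ≠ b

lemma card_chainF (k ℓ : ℕ) {a : ℤ} (ha : a ∈ Sk k) :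
    (chainF k ℓ a).card = (2 * k - 1) ^ (ℓ + 1) := by
  induction ℓ with
  | zero =>
    have : (chainF k 0 a).card = ((Sk k).erase a).card := by
      apply Finset.card_nbij' (fun f => f 0) (fun x _ => x)
      · intro f hf
        simp only [Finset.mem_coe, chainF, Finset.mem_filter, Fintype.mem_piFinset] at hf
        simp [Finset.mem_erase, hf.2.1, hf.1 0]
      · intro x hx
        simp only [Finset.mem_coe, Finset.mem_erase] at hx
        simp only [Finset.mem_coe, chainF, Finset.mem_filter, Fintype.mem_piFinset]
        exact ⟨fun _ => hx.2, hx.1, fun j => j.elim0⟩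
      · intro f hf; funext j; show f 0 = f j; exact congrArg f (Fin.ext (by omega))
      · intro x hx; rfl
    rw [this, Finset.card_erase_of_mem ha, card_Sk, pow_one]
  | succ ℓ ih =>
    have key : (chainF k (ℓ+1) a).card
        = ((chainF k ℓ a).sigma fun g => (Sk k).erase (g (Fin.last ℓ))).card := by
      apply Finset.card_nbij' (fun f => ⟨Fin.init f, f (Fin.last (ℓ+1))⟩)
        (fun p => Fin.snoc p.1 p.2)
      · intro f hf
        simp only [Finset.mem_coe, chainF, Finset.mem_filter, Fintype.mem_piFinset] at hf
        obtain ⟨hmem, h0, hcons⟩ := hf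
        simp only [Finset.mem_coe, Finset.mem_sigma, chainF, Finset.mem_filter, Fintype.mem_piFinset,
          Finset.mem_erase]
        refine ⟨⟨fun j => hmem _, ?_, fun j => ?_⟩, ?_, hmem _⟩
        · simpa [Fin.init] using h0
        · have := hcons j.castSucc
          rw [Fin.succ_castSucc] at this; exact this
        · have h1 := hcons (Fin.last ℓ)
          have h2 : (Fin.last ℓ).succ = Fin.last (ℓ+1) := rfl
          rw [h2] at h1
          simpa [Fin.init] using fun h => h1 h.symm
      · rintro ⟨g, x⟩ hp
        simp only [Finset.mem_coe, Finset.mem_sigma, chainF, Finset.mem_filter, Fintype.mem_piFinset,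
          Finset.mem_erase] at hp
        obtain ⟨⟨hmem, h0, hcons⟩, hxne, hxS⟩ := hp
        simp only [Finset.mem_coe, chainF, Finset.mem_filter, Fintype.mem_piFinset]
        refine ⟨fun j => ?_, ?_, fun j => ?_⟩
        · induction j using Fin.lastCases with
          | last => simpa using hxS
          | cast i => simpa using hmem i
        · have h0' : (0 : Fin (ℓ+2)) = (0 : Fin (ℓ+1)).castSucc := by ext; simp
          rw [h0', Fin.snoc_castSucc]; exact h0
        · induction j using Fin.lastCases with
          | last =>
            have h1 : (Fin.last ℓ).succ = Fin.last (ℓ+1) := rfl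
            rw [h1, Fin.snoc_castSucc, Fin.snoc_last]
            exact fun h => hxne h.symm
          | cast i =>
            rw [Fin.succ_castSucc, Fin.snoc_castSucc, Fin.snoc_castSucc]
            exact hcons i
      · intro f hf; simp [Fin.snoc_init_self]
      · rintro ⟨g, x⟩ hp; simp [Fin.init_snoc, Fin.snoc_last]
    rw [key, Finset.card_sigma]
    have hconst : ∀ g ∈ chainF k ℓ a, ((Sk k).erase (g (Fin.last ℓ))).card = 2 * k - 1 := by
      intro g hg
      simp only [chainF, Finset.mem_filter, Fintype.mem_piFinset] at hg
      rw [Finset.card_erase_of_mem (hg.1 _), card_Sk]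
    rw [Finset.sum_congr rfl hconst, Finset.sum_const, ih, smul_eq_mul]
    ring

lemma one_le_of_mem_Sk {k : ℕ} {x : ℤ} (h : x ∈ Sk k) : 1 ≤ k := by
  obtain ⟨h0, h1⟩ := mem_Sk.mp h
  have := Int.one_le_abs h0
  have : (1:ℤ) ≤ (k:ℤ) := this.trans h1
  exact_mod_cast this

lemma card_pathF (k ℓ : ℕ) {a b : ℤ} (ha : a ∈ Sk k) (hb : b ∈ Sk k) (hab : a ≠ b) :
    ((pathF k ℓ a b).card : ℤ) = G (2 * (k:ℤ) - 1) (ℓ + 1) := by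
  induction ℓ with
  | zero =>
    have : (pathF k 0 a b).card = ((Sk k).erase a |>.erase b).card := by
      apply Finset.card_nbij' (fun f => f 0) (fun x _ => x)
      · intro f hf
        simp only [Finset.mem_coe, pathF, chainF, Finset.mem_filter, Fintype.mem_piFinset] at hf
        obtain ⟨⟨hmem, h0, _⟩, hlast⟩ := hf
        have : f (Fin.last 0) = f 0 := rfl
        rw [this] at hlast
        simp [Finset.mem_erase, h0, hlast, hmem 0]
      · intro x hx
        simp only [Finset.mem_coe, Finset.mem_erase] at hx
        simp only [Finset.mem_coe, pathF, chainF, Finset.mem_filter, Fintype.mem_piFinset]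
        exact ⟨⟨fun _ => hx.2.2, hx.2.1, fun j => j.elim0⟩, hx.1⟩
      · intro f hf; funext j; show f 0 = f j; exact congrArg f (Fin.ext (by omega))
      · intro x hx; rfl
    rw [this, Finset.card_erase_of_mem (Finset.mem_erase.mpr ⟨fun h => hab h.symm, hb⟩),
      Finset.card_erase_of_mem ha, card_Sk, G_one]
    have hk := one_le_of_mem_Sk ha
    clear * - hk; omega
  | succ ℓ ih =>
    -- pathF (ℓ+1) = chainF (ℓ+1) minus those with last value = b,
    -- and those biject with pathF ℓ a b.
    have hsplit : (pathF k (ℓ+1) a b).card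
        = (chainF k (ℓ+1) a).card - ((chainF k (ℓ+1) a).filter fun f => f (Fin.last (ℓ+1)) = b).card := by
      have := Finset.card_filter_add_card_filter_not
        (s := chainF k (ℓ+1) a) (p := fun f => f (Fin.last (ℓ+1)) = b)
      simp only [ne_eq, pathF] at this ⊢
      generalize ((chainF k (ℓ+1) a).filter fun f => f (Fin.last (ℓ+1)) = b).card = A at this ⊢
      generalize ((chainF k (ℓ+1) a).filter fun f => ¬ f (Fin.last (ℓ+1)) = b).card = B at this ⊢
      omega
    have hbij : ((chainF k (ℓ+1) a).filter fun f => f (Fin.last (ℓ+1)) = b).card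
        = (pathF k ℓ a b).card := by
      apply Finset.card_nbij' (fun f => Fin.init f) (fun g => Fin.snoc g b)
      · intro f hf
        simp only [Finset.mem_coe, Finset.mem_filter, chainF, Fintype.mem_piFinset] at hf
        obtain ⟨⟨hmem, h0, hcons⟩, hlast⟩ := hf
        simp only [Finset.mem_coe, pathF, chainF, Finset.mem_filter, Fintype.mem_piFinset]
        refine ⟨⟨fun j => hmem _, ?_, fun j => ?_⟩, ?_⟩
        · simpa [Fin.init] using h0
        · have := hcons j.castSucc
          rw [Fin.succ_castSucc] at this; exact this
        · have h1 := hcons (Fin.last ℓ)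
          have h2 : (Fin.last ℓ).succ = Fin.last (ℓ+1) := rfl
          rw [h2, hlast] at h1
          simpa [Fin.init] using h1
      · intro g hg
        simp only [Finset.mem_coe, pathF, chainF, Finset.mem_filter, Fintype.mem_piFinset] at hg
        obtain ⟨⟨hmem, h0, hcons⟩, hlast⟩ := hg
        simp only [Finset.mem_coe, Finset.mem_filter, chainF, Fintype.mem_piFinset]
        refine ⟨⟨fun j => ?_, ?_, fun j => ?_⟩, by simp [Fin.snoc_last]⟩
        · induction j using Fin.lastCases with
          | last => simpa using hb
          | cast i => simpa using hmem i
        · have h0' : (0 : Fin (ℓ+2)) = (0 : Fin (ℓ+1)).castSucc := by ext; simp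
          rw [h0', Fin.snoc_castSucc]; exact h0
        · induction j using Fin.lastCases with
          | last =>
            have h1 : (Fin.last ℓ).succ = Fin.last (ℓ+1) := rfl
            rw [h1, Fin.snoc_castSucc, Fin.snoc_last]
            exact hlast
          | cast i =>
            rw [Fin.succ_castSucc, Fin.snoc_castSucc, Fin.snoc_castSucc]
            exact hcons i
      · intro f hf
        simp only [Finset.mem_coe, Finset.mem_filter] at hf
        rw [← hf.2]; exact Fin.snoc_init_self f
      · intro g hg; simp [Fin.init_snoc]
    have hle : ((chainF k (ℓ+1) a).filter fun f => f (Fin.last (ℓ+1)) = b).card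
        ≤ (chainF k (ℓ+1) a).card := Finset.card_filter_le _ _
    have hcard := card_chainF k (ℓ+1) ha
    have hk := one_le_of_mem_Sk ha
    have hle' : (pathF k ℓ a b).card ≤ (2*k-1)^(ℓ+1+1) := by
      rw [← hcard, ← hbij]; exact hle
    rw [G_succ, ← ih, hsplit, hbij, hcard, Nat.cast_sub hle', Nat.cast_pow]
    have hc : ((2*k-1 : ℕ) : ℤ) = 2*(k:ℤ)-1 := by clear * - hk; omega
    rw [hc]

noncomputable def Pairs (k : ℕ) : Finset (ℤ × ℤ) :=
  ((Sk k) ×ˢ (Sk k)).filter fun p => p.1 ≠ p.2 ∧ p.1 ≠ -p.2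

lemma mem_Pairs {k : ℕ} {p : ℤ × ℤ} :
    p ∈ Pairs k ↔ p.1 ∈ Sk k ∧ p.2 ∈ Sk k ∧ p.1 ≠ p.2 ∧ p.1 ≠ -p.2 := by
  simp [Pairs, Finset.mem_filter, and_assoc]

lemma card_Pairs {k : ℕ} (hk : 1 ≤ k) : ((Pairs k).card : ℤ) = 2 * k * (2 * k - 2) := by
  have key : (Pairs k).card = ((Sk k).sigma fun a => ((Sk k).erase a).erase (-a)).card := by
    apply Finset.card_nbij' (fun p => ⟨p.1, p.2⟩) (fun q => (q.1, q.2))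
    · rintro ⟨a, b⟩ hp
      rw [Finset.mem_coe, mem_Pairs] at hp
      obtain ⟨ha, hb, h1, h2⟩ := hp
      simp only [Finset.mem_coe, Finset.mem_sigma, Finset.mem_erase]
      refine ⟨ha, ?_, fun h => h1 h.symm, hb⟩
      intro h; exact h2 (by rw [h]; ring)
    · rintro ⟨a, b⟩ hq
      simp only [Finset.mem_coe, Finset.mem_sigma, Finset.mem_erase] at hq
      obtain ⟨ha, ⟨hne, hbb, hb⟩⟩ := hq
      rw [Finset.mem_coe, mem_Pairs]
      dsimp only
      exact ⟨ha, hb, fun h => hbb h.symm, fun h => hne (by rw [h]; ring)⟩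
    · rintro ⟨a, b⟩ _; rfl
    · rintro ⟨a, b⟩ _; rfl
  rw [key, Finset.card_sigma]
  have hconst : ∀ a ∈ Sk k, (((Sk k).erase a).erase (-a)).card = 2 * k - 2 := by
    intro a ha
    have hane : -a ≠ a := by
      have h0 := (mem_Sk.mp ha).1
      intro h; apply h0; omega
    rw [Finset.card_erase_of_mem (Finset.mem_erase.mpr ⟨hane, neg_mem_Sk ha⟩),
      Finset.card_erase_of_mem ha, card_Sk]
    clear * - hk; omega
  rw [Finset.sum_congr rfl hconst, Finset.sum_const, card_Sk, smul_eq_mul]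
  clear * - hk
  have h2 : 2 ≤ 2 * k := by omega
  push_cast [Nat.cast_sub h2]
  ring

lemma gammaP_eq (M : ℕ) (x : ℤ) : gammaP (M + 3) x = G (x - 1) (M + 1) := by
  rw [gammaP, G]
  apply Finset.sum_congr rfl
  intro i hi
  congr 1

section Adj
variable {M n : ℕ}

lemma adj_u0 (i : Fin n) (j : Fin (M + 3 - 2)) (h : j.val = 0) :
    bookAdj (M + 3) n (Sum.inr (i, j)) (Sum.inl false) := h

lemma adj_vlast (i : Fin n) (j : Fin (M + 3 - 2)) (h : j.val = M) :
    bookAdj (M + 3) n (Sum.inr (i, j)) (Sum.inl true) := h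

lemma adj_page (i : Fin n) (j j' : Fin (M + 3 - 2)) (h : j.val + 1 = j'.val) :
    bookAdj (M + 3) n (Sum.inr (i, j)) (Sum.inr (i, j')) := ⟨rfl, Or.inl h⟩

end Adj


/-- With `λ = 2k`, the number of zero-free proper colorings of `B_m^n` (the book graph
`B(m,n)` with the edge `uv` replaced by a digon with one positive and one negative edge)
with color set `{-k, …, -1, 1, …, k}` is `λ(λ-2)·γ_m(λ)^n`. -/
theorem statement14 (m n : ℕ) (hm : 3 ≤ m) (hn : 2 ≤ n) (k : ℕ) (hk : 1 ≤ k) :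
    (Nat.card {c : BookVertex m n → ℤ //
        (∀ x, c x ≠ 0 ∧ |c x| ≤ (k : ℤ)) ∧
        (∀ x y, bookAdj m n x y →
          ¬((x = Sum.inl false ∧ y = Sum.inl true) ∨
            (x = Sum.inl true ∧ y = Sum.inl false)) → c x ≠ c y) ∧
        c (Sum.inl false) ≠ c (Sum.inl true) ∧
        c (Sum.inl false) ≠ - c (Sum.inl true)} : ℤ) =
      (2 * (k : ℤ)) * (2 * (k : ℤ) - 2) * gammaP m (2 * (k : ℤ)) ^ n := by
  obtain ⟨M, rfl⟩ : ∃ M, m = M + 3 := ⟨m - 3, by omega⟩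
  clear hm
  classical
  set F : Finset (BookVertex (M + 3) n → ℤ) :=
    (Fintype.piFinset fun _ => Sk k).filter (fun c =>
      (∀ i : Fin n, c (Sum.inr (i, (0 : Fin (M + 1)))) ≠ c (Sum.inl false)) ∧
      (∀ i : Fin n, c (Sum.inr (i, Fin.last M)) ≠ c (Sum.inl true)) ∧
      (∀ (i : Fin n) (j : Fin M),
        c (Sum.inr (i, j.castSucc)) ≠ c (Sum.inr (i, j.succ))) ∧
      c (Sum.inl false) ≠ c (Sum.inl true) ∧
      c (Sum.inl false) ≠ - c (Sum.inl true)) with hF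
  have hiff : ∀ c : BookVertex (M + 3) n → ℤ,
      ((∀ x, c x ≠ 0 ∧ |c x| ≤ (k : ℤ)) ∧
        (∀ x y, bookAdj (M + 3) n x y →
          ¬((x = Sum.inl false ∧ y = Sum.inl true) ∨
            (x = Sum.inl true ∧ y = Sum.inl false)) → c x ≠ c y) ∧
        c (Sum.inl false) ≠ c (Sum.inl true) ∧
        c (Sum.inl false) ≠ - c (Sum.inl true)) ↔ c ∈ F := by
    intro c
    rw [hF, Finset.mem_filter, Fintype.mem_piFinset]
    constructor
    · rintro ⟨h1, h2, h3, h4⟩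
      refine ⟨fun x => mem_Sk.mpr (h1 x), ?_, ?_, ?_, h3, h4⟩
      · intro i
        exact h2 _ _ (adj_u0 i ⟨0, by omega⟩ rfl) (by simp)
      · intro i
        exact h2 _ _ (adj_vlast i (Fin.last M) rfl) (by simp)
      · intro i j
        exact h2 _ _ (adj_page i j.castSucc j.succ (by simp [Fin.succ_castSucc])) (by simp)
    · rintro ⟨hmem, hu, hv, hpage, h3, h4⟩
      refine ⟨fun x => mem_Sk.mp (hmem x), ?_, h3, h4⟩
      rintro (⟨t⟩ | ⟨i, j⟩) (⟨t'⟩ | ⟨i', j'⟩) hadj hne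
      · -- inl inl
        cases t <;> cases t'
        · exact absurd rfl hadj
        · exact absurd (Or.inl ⟨rfl, rfl⟩) hne
        · exact absurd (Or.inr ⟨rfl, rfl⟩) hne
        · exact absurd rfl hadj
      · -- inl inr
        cases t
        · have hj : j' = (0 : Fin (M + 1)) := Fin.ext (by have h' : j'.val = 0 := hadj; simpa using h')
          rw [hj]
          exact fun h => hu i' h.symm
        · have hj : j' = Fin.last M := Fin.ext (by have h' : j'.val = M + 3 - 3 := hadj; simpa using h')
          rw [hj]
          exact fun h => hv i' h.symm
      · -- inr inl
        cases t'
        · have hj : j = (0 : Fin (M + 1)) := Fin.ext (by have h' : j.val = 0 := hadj; simpa using h')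
          rw [hj]
          exact hu i
        · have hj : j = Fin.last M := Fin.ext (by have h' : j.val = M + 3 - 3 := hadj; simpa using h')
          rw [hj]
          exact hv i
      · -- inr inr
        obtain ⟨rfl, hor⟩ := (hadj : i = i' ∧ (j.val + 1 = j'.val ∨ j'.val + 1 = j.val))
        rcases hor with h | h
        · have hlt : j.val < M := by have := j'.isLt; omega
          have hj : j = (⟨j.val, hlt⟩ : Fin M).castSucc := Fin.ext (by simp)
          have hj' : j' = (⟨j.val, hlt⟩ : Fin M).succ := Fin.ext (by simp [← h])
          have hp := hpage i ⟨j.val, hlt⟩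
          rw [← hj, ← hj'] at hp
          exact hp
        · have hlt : j'.val < M := by have := j.isLt; omega
          have hj' : j' = (⟨j'.val, hlt⟩ : Fin M).castSucc := Fin.ext (by simp)
          have hj : j = (⟨j'.val, hlt⟩ : Fin M).succ := Fin.ext (by simp [← h])
          have hp := hpage i ⟨j'.val, hlt⟩
          rw [← hj', ← hj] at hp
          exact fun hh => hp hh.symm
  rw [Nat.card_congr (Equiv.subtypeEquivRight hiff), Nat.card_eq_fintype_card,
    Fintype.card_coe]
  have hcardF : F.card =
      ((Pairs k).sigma fun ab =>
        Fintype.piFinset fun _ : Fin n => pathF k M ab.1 ab.2).card := by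
    apply Finset.card_nbij'
      (fun c => ⟨(c (Sum.inl false), c (Sum.inl true)), fun i j => c (Sum.inr (i, j))⟩)
      (fun p => fun x => Sum.elim (fun t => cond t p.1.2 p.1.1) (fun q => p.2 q.1 q.2) x)
    · intro c hc
      rw [hF, Finset.mem_coe, Finset.mem_filter, Fintype.mem_piFinset] at hc
      obtain ⟨hmem, hu, hv, hpage, h3, h4⟩ := hc
      simp only [Finset.mem_coe, Finset.mem_sigma]
      refine ⟨mem_Pairs.mpr ⟨hmem _, hmem _, h3, h4⟩, ?_⟩
      rw [Fintype.mem_piFinset]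
      intro i
      rw [pathF, Finset.mem_filter, chainF, Finset.mem_filter, Fintype.mem_piFinset]
      exact ⟨⟨fun j => hmem _, hu i, fun j => hpage i j⟩, hv i⟩
    · rintro ⟨⟨a, b⟩, f⟩ hp
      simp only [Finset.mem_coe, Finset.mem_sigma] at hp
      obtain ⟨hab, hf⟩ := hp
      rw [mem_Pairs] at hab
      obtain ⟨ha, hb, h3, h4⟩ := hab
      rw [Fintype.mem_piFinset] at hf
      have hf' : ∀ i, f i ∈ pathF k M a b := hf
      rw [hF, Finset.mem_coe, Finset.mem_filter, Fintype.mem_piFinset]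
      have hfm : ∀ i, (∀ j, f i j ∈ Sk k) ∧ f i 0 ≠ a ∧
          (∀ j : Fin M, f i j.castSucc ≠ f i j.succ) ∧ f i (Fin.last M) ≠ b := by
        intro i
        have := hf' i
        rw [pathF, Finset.mem_filter, chainF, Finset.mem_filter, Fintype.mem_piFinset] at this
        exact ⟨this.1.1, this.1.2.1, this.1.2.2, this.2⟩
      refine ⟨?_, ?_, ?_, ?_, h3, h4⟩
      · rintro (⟨t⟩ | ⟨i, j⟩)
        · cases t
          · exact ha
          · exact hb
        · exact (hfm i).1 j
      · intro i; exact (hfm i).2.1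
      · intro i; exact (hfm i).2.2.2
      · intro i j; exact (hfm i).2.2.1 j
    · intro c hc
      funext x
      rcases x with (⟨t⟩ | ⟨i, j⟩)
      · cases t <;> rfl
      · rfl
    · rintro ⟨⟨a, b⟩, f⟩ hp
      rfl
  rw [hcardF, Finset.card_sigma, Nat.cast_sum]
  have hconst : ∀ ab ∈ Pairs k,
      (((Fintype.piFinset fun _ : Fin n => pathF k M ab.1 ab.2).card : ℤ)) =
        G (2 * (k : ℤ) - 1) (M + 1) ^ n := by
    intro ab hab
    rw [mem_Pairs] at hab
    obtain ⟨ha, hb, hne, _⟩ := hab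
    rw [Fintype.card_piFinset]
    simp only [Finset.prod_const, Finset.card_univ, Fintype.card_fin]
    push_cast
    rw [card_pathF k M ha hb hne]
  rw [Finset.sum_congr rfl hconst, Finset.sum_const, nsmul_eq_mul, card_Pairs hk,
    gammaP_eq]
end

section
/- Let m ≥ 3, n ≥ 1 and k ≥ 1, and write λ = 2k. The number of proper colorings of the signed book graph (B(m,n), σ_1) with color set {−k,…,−1,1,…,k} equals λ·γ_m(λ)^{n−1}·γ_{m+1}(λ). -/


noncomputable def colS (k : ℕ) : Finset ℤ := (Finset.Icc (-(k:ℤ)) (k:ℤ)).erase 0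

lemma mem_colS {k : ℕ} {x : ℤ} : x ∈ colS k ↔ x ≠ 0 ∧ |x| ≤ (k:ℤ) := by
  simp [colS, Finset.mem_erase, abs_le]

lemma card_colS (k : ℕ) : (colS k).card = 2*k := by
  rw [colS, Finset.card_erase_of_mem (by simp), Int.card_Icc]
  omega

lemma neg_mem_colS {k : ℕ} {x : ℤ} (h : x ∈ colS k) : -x ∈ colS k := by
  rw [mem_colS] at h ⊢; simpa using h

def Gp (t : ℕ) (x : ℤ) : ℤ := ∑ i ∈ Finset.range (t+1), (-1)^i * (x-1)^(t-i)

lemma gammaP_eq_Gp (m : ℕ) (hm : 2 ≤ m) (x : ℤ) : gammaP m x = Gp (m-2) x := by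
  unfold gammaP Gp
  have h1 : m - 1 = (m-2)+1 := by omega
  rw [h1]

lemma Gp_mul (t : ℕ) (x : ℤ) : (x - 1) * Gp t x = Gp (t+1) x + (-1)^t := by
  have h2 : Gp (t+1) x = (∑ i ∈ Finset.range (t+1), (-1:ℤ)^i * (x-1)^(t+1-i)) + (-1)^(t+1) := by
    rw [Gp, Finset.sum_range_succ, Nat.sub_self, pow_zero, mul_one]
  rw [h2, Gp, Finset.mul_sum]
  have h : ∀ i ∈ Finset.range (t+1), (x-1) * ((-1:ℤ)^i * (x-1)^(t-i)) = (-1:ℤ)^i * (x-1)^(t+1-i) := by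
    intro i hi; rw [Finset.mem_range] at hi
    have h2 : t+1-i = (t-i)+1 := by omega
    rw [h2, pow_succ]; ring
  rw [Finset.sum_congr rfl h]
  ring

noncomputable def pageSet (k L : ℕ) (a b : ℤ) : Finset (Fin (L+1) → ℤ) :=
  (Fintype.piFinset fun _ => colS k).filter fun f =>
    (∀ i : Fin L, f i.castSucc ≠ f i.succ) ∧ f 0 ≠ a ∧ f (Fin.last L) ≠ b

lemma mem_pageSet {k L : ℕ} {a b : ℤ} {f : Fin (L+1) → ℤ} :
    f ∈ pageSet k L a b ↔ (∀ j, f j ∈ colS k) ∧ (∀ i : Fin L, f i.castSucc ≠ f i.succ)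
      ∧ f 0 ≠ a ∧ f (Fin.last L) ≠ b := by
  simp [pageSet, Fintype.mem_piFinset]

lemma pageSet_zero (k : ℕ) (a b : ℤ) :
    pageSet k 0 a b = (((colS k).erase a).erase b).image (fun x _ => x) := by
  ext f
  rw [mem_pageSet]
  simp only [Finset.mem_image, Finset.mem_erase]
  constructor
  · rintro ⟨hS, -, h0, hl⟩
    exact ⟨f 0, ⟨hl, h0, hS 0⟩, funext fun j => by rw [Fin.fin_one_eq_zero j]⟩
  · rintro ⟨x, ⟨hxb, hxa, hxS⟩, rfl⟩
    exact ⟨fun _ => hxS, fun i => i.elim0, hxa, hxb⟩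

lemma pageSet_succ (k L : ℕ) (a b : ℤ) :
    pageSet k (L+1) a b
      = ((colS k).erase a).biUnion (fun x => (pageSet k L x b).image (Fin.cons x)) := by
  ext f
  simp only [Finset.mem_biUnion, Finset.mem_image, Finset.mem_erase, mem_pageSet]
  constructor
  · rintro ⟨hS, hpath, h0, hl⟩
    refine ⟨f 0, ⟨h0, hS 0⟩, Fin.tail f, ⟨fun j => hS j.succ, fun i => ?_, ?_, ?_⟩,
      Fin.cons_self_tail f⟩
    · have := hpath i.succ
      rw [← Fin.succ_castSucc] at this
      simpa [Fin.tail] using this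
    · simpa [Fin.tail] using (hpath 0).symm
    · simpa [Fin.tail, Fin.succ_last] using hl
  · rintro ⟨x, ⟨hxa, hxS⟩, g, ⟨hgS, hgpath, hg0, hgl⟩, rfl⟩
    refine ⟨fun j => ?_, fun i => ?_, ?_, ?_⟩
    · induction j using Fin.cases with
      | zero => simpa using hxS
      | succ j => simpa using hgS j
    · induction i using Fin.cases with
      | zero => simpa using fun h => hg0 h.symm
      | succ i =>
        rw [← Fin.succ_castSucc, Fin.cons_succ, Fin.cons_succ]
        exact hgpath i
    · simpa using hxa
    · rw [← Fin.succ_last, Fin.cons_succ]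
      exact hgl

lemma card_pageSet_succ (k L : ℕ) (a b : ℤ) :
    (pageSet k (L+1) a b).card = ∑ x ∈ (colS k).erase a, (pageSet k L x b).card := by
  rw [pageSet_succ, Finset.card_biUnion]
  · exact Finset.sum_congr rfl fun x _ =>
      Finset.card_image_of_injective _ (Fin.cons_right_injective (α := fun _ : Fin (L+1+1) => ℤ) x)
  · intro x hx y hy hxy
    rw [Function.onFun, Finset.disjoint_left]
    rintro f hf hf'
    simp only [Finset.mem_image] at hf hf'
    obtain ⟨g, -, rfl⟩ := hf
    obtain ⟨g', -, h⟩ := hf'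
    apply hxy
    have := congrFun h 0
    simpa using this.symm

lemma card_pageSet (k : ℕ) (hk : 1 ≤ k) (L : ℕ) (a b : ℤ) (ha : a ∈ colS k) (hb : b ∈ colS k) :
    ((pageSet k L a b).card : ℤ) = Gp (L+1) (2*(k:ℤ)) + (-1)^L * (if a = b then 1 else 0) := by
  induction L generalizing a with
  | zero =>
    rw [pageSet_zero, Finset.card_image_of_injective _ (fun x y h => congrFun h 0)]
    have hG : Gp 1 (2*(k:ℤ)) = 2*(k:ℤ) - 2 := by
      simp [Gp, Finset.sum_range_succ]; ring
    rcases eq_or_ne a b with rfl | hab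
    · rw [Finset.erase_idem, Finset.card_erase_of_mem ha, card_colS]
      simp [hG]; omega
    · rw [Finset.card_erase_of_mem (Finset.mem_erase.2 ⟨hab.symm, hb⟩),
        Finset.card_erase_of_mem ha, card_colS]
      simp [hG, hab]; omega
  | succ L ih =>
    rw [card_pageSet_succ]
    push_cast
    rw [Finset.sum_congr rfl (fun x hx => ih x (Finset.mem_of_mem_erase hx)),
      Finset.sum_add_distrib, Finset.sum_const, ← Finset.mul_sum, Finset.sum_ite_eq',
      Finset.card_erase_of_mem ha, card_colS, nsmul_eq_mul]
    have hcast : ((2*k-1 : ℕ) : ℤ) = 2*(k:ℤ)-1 := by omega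
    have hmul := Gp_mul (L+1) (2*(k:ℤ))
    have hsign : (-1:ℤ)^(L+1) = -(-1)^L := by rw [pow_succ]; ring
    have hb' : b ∈ (colS k).erase a ↔ ¬ (a = b) :=
      ⟨fun h h2 => (Finset.mem_erase.1 h).1 h2.symm,
       fun h => Finset.mem_erase.2 ⟨fun h' => h h'.symm, hb⟩⟩
    rw [hcast]
    rcases eq_or_ne a b with rfl | hab
    · rw [if_pos rfl, if_neg (Finset.notMem_erase a _)]
      linarith
    · rw [if_pos (hb'.2 hab), if_neg hab]
      linarith

section helpers
variable {m n l : ℕ}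

lemma bookAdj_ll {a b : Bool} : bookAdj m n (.inl a) (.inl b) ↔ a ≠ b := by cases a <;> cases b <;> exact Iff.rfl
lemma bookAdj_fr {i : Fin n} {j : Fin (m-2)} :
    bookAdj m n (.inl false) (.inr (i,j)) ↔ j.val = 0 := Iff.rfl
lemma bookAdj_tr {i : Fin n} {j : Fin (m-2)} :
    bookAdj m n (.inl true) (.inr (i,j)) ↔ j.val = m - 3 := Iff.rfl
lemma bookAdj_rf {i : Fin n} {j : Fin (m-2)} :
    bookAdj m n (.inr (i,j)) (.inl false) ↔ j.val = 0 := Iff.rfl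
lemma bookAdj_rt {i : Fin n} {j : Fin (m-2)} :
    bookAdj m n (.inr (i,j)) (.inl true) ↔ j.val = m - 3 := Iff.rfl
lemma bookAdj_rr {i i' : Fin n} {j j' : Fin (m-2)} :
    bookAdj m n (.inr (i,j)) (.inr (i',j')) ↔
      i = i' ∧ (j.val + 1 = j'.val ∨ j'.val + 1 = j.val) := Iff.rfl

lemma sigmaL_ll {a b : Bool} : sigmaL m n l (.inl a) (.inl b) = 1 := by cases a <;> cases b <;> rfl
lemma sigmaL_fr {i : Fin n} {j : Fin (m-2)} :
    sigmaL m n l (.inl false) (.inr (i,j)) = if j.val = 0 ∧ i.val < l then -1 else 1 := rfl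
lemma sigmaL_tr {i : Fin n} {j : Fin (m-2)} :
    sigmaL m n l (.inl true) (.inr (i,j)) = 1 := rfl
lemma sigmaL_rf {i : Fin n} {j : Fin (m-2)} :
    sigmaL m n l (.inr (i,j)) (.inl false) = if j.val = 0 ∧ i.val < l then -1 else 1 := rfl
lemma sigmaL_rt {i : Fin n} {j : Fin (m-2)} :
    sigmaL m n l (.inr (i,j)) (.inl true) = 1 := rfl
lemma sigmaL_rr {i i' : Fin n} {j j' : Fin (m-2)} :
    sigmaL m n l (.inr (i,j)) (.inr (i',j')) = 1 := rfl
end helpers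

def explicitCond (k t n' : ℕ) (c : BookVertex (t+3) (n'+1) → ℤ) : Prop :=
  (∀ x, c x ∈ colS k) ∧ c (Sum.inl false) ≠ c (Sum.inl true) ∧
  ∀ i : Fin (n'+1), (fun j : Fin (t+1) => c (Sum.inr (i, j))) ∈
     pageSet k t (if i.val = 0 then -(c (Sum.inl false)) else c (Sum.inl false))
       (c (Sum.inl true))

lemma cond_iff (k t n' : ℕ) (c : BookVertex (t+3) (n'+1) → ℤ) :
    ((∀ x, c x ≠ 0 ∧ |c x| ≤ (k : ℤ)) ∧
        ∀ x y, bookAdj (t+3) (n'+1) x y → c x ≠ sigmaL (t+3) (n'+1) 1 x y * c y)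
    ↔ explicitCond k t n' c := by
  constructor
  · rintro ⟨h1, h2⟩
    have hS : ∀ x, c x ∈ colS k := fun x => mem_colS.2 (h1 x)
    refine ⟨hS, ?_, ?_⟩
    · have := h2 (Sum.inl false) (Sum.inl true) (bookAdj_ll.2 (by simp))
      rwa [sigmaL_ll, one_mul] at this
    · intro i
      rw [mem_pageSet]
      refine ⟨fun j => hS _, fun jj => ?_, ?_, ?_⟩
    -- path
      · have := h2 (Sum.inr (i, jj.castSucc)) (Sum.inr (i, jj.succ))
          (bookAdj_rr.2 ⟨rfl, Or.inl (by simp)⟩)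
        rwa [sigmaL_rr, one_mul] at this
    -- first vertex
      · have h3 := h2 (Sum.inr (i, (0 : Fin (t+1)))) (Sum.inl false) (bookAdj_rf.2 rfl)
        rw [sigmaL_rf] at h3
        rcases Nat.eq_zero_or_pos i.val with hi | hi
        · rw [if_pos hi]
          rw [if_pos ⟨rfl, by omega⟩] at h3
          intro h; exact h3 (by rw [h]; ring)
        · rw [if_neg (by omega)]
          rw [if_neg (fun h => by have := h.2; omega)] at h3
          intro h; exact h3 (by rw [h]; ring)
    -- last vertex
      · have h3 := h2 (Sum.inr (i, Fin.last t)) (Sum.inl true) (bookAdj_rt.2 rfl)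
        rwa [sigmaL_rt, one_mul] at h3
  · rintro ⟨hS, huv, hpages⟩
    refine ⟨fun x => mem_colS.1 (hS x), ?_⟩
    rintro (b1|⟨i,j⟩) (b2|⟨i',j'⟩) hadj
    · rw [bookAdj_ll] at hadj
      rw [sigmaL_ll, one_mul]
      cases b1 <;> cases b2 <;> first | exact absurd rfl hadj | exact huv | exact huv.symm
    · obtain ⟨-, -, h0, hlast⟩ := mem_pageSet.1 (hpages i')
      cases b1
      · rw [bookAdj_fr] at hadj
        have hj : j' = (0 : Fin (t+1)) := Fin.ext (by simpa using hadj)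
        subst hj
        rw [sigmaL_fr]
        rcases Nat.eq_zero_or_pos i'.val with hi | hi
        · rw [if_pos ⟨rfl, by omega⟩]
          rw [if_pos hi] at h0
          intro h; apply h0; linarith
        · rw [if_neg (fun h => by have := h.2; omega)]
          rw [if_neg (by omega)] at h0
          rw [one_mul]
          exact fun h => h0 h.symm
      · rw [bookAdj_tr] at hadj
        have hj : j' = Fin.last t := Fin.ext (by simpa using hadj)
        subst hj
        rw [sigmaL_tr, one_mul]
        exact fun h => hlast h.symm
    · obtain ⟨-, -, h0, hlast⟩ := mem_pageSet.1 (hpages i)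
      cases b2
      · rw [bookAdj_rf] at hadj
        have hj : j = (0 : Fin (t+1)) := Fin.ext (by simpa using hadj)
        subst hj
        rw [sigmaL_rf]
        rcases Nat.eq_zero_or_pos i.val with hi | hi
        · rw [if_pos ⟨rfl, by omega⟩]
          rw [if_pos hi] at h0
          intro h; exact h0 (by rw [h]; ring)
        · rw [if_neg (fun h => by have := h.2; omega)]
          rw [if_neg (by omega)] at h0
          rw [one_mul]
          exact h0
      · rw [bookAdj_rt] at hadj
        have hj : j = Fin.last t := Fin.ext (by simpa using hadj)
        subst hj
        rw [sigmaL_rt, one_mul]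
        exact hlast
    · obtain ⟨-, hpath, -, -⟩ := mem_pageSet.1 (hpages i)
      rw [bookAdj_rr] at hadj
      obtain ⟨rfl, hor⟩ := hadj
      rw [sigmaL_rr, one_mul]
      rcases hor with h | h
      · have hlt : j.val < t := by omega
        have e1 : (⟨j.val, hlt⟩ : Fin t).castSucc = j := Fin.ext rfl
        have e2 : (⟨j.val, hlt⟩ : Fin t).succ = j' := Fin.ext h
        rw [← e1, ← e2]
        exact hpath ⟨j.val, hlt⟩
      · have hlt : j'.val < t := by omega
        have e1 : (⟨j'.val, hlt⟩ : Fin t).castSucc = j' := Fin.ext rfl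
        have e2 : (⟨j'.val, hlt⟩ : Fin t).succ = j := Fin.ext h
        rw [← e1, ← e2]
        exact fun hh => hpath ⟨j'.val, hlt⟩ hh.symm

def bookEquiv (k t n' : ℕ) : {c : BookVertex (t+3) (n'+1) → ℤ // explicitCond k t n' c} ≃
    (a : {a : ℤ // a ∈ colS k}) × (b : {b : ℤ // b ∈ (colS k).erase a.1}) ×
      ((i : Fin (n'+1)) →
        {g : Fin (t+1) → ℤ // g ∈ pageSet k t (if i.val = 0 then -a.1 else a.1) b.1}) where
  toFun c := ⟨⟨c.1 (Sum.inl false), c.2.1 _⟩,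
    ⟨c.1 (Sum.inl true), Finset.mem_erase.2 ⟨(c.2.2.1).symm, c.2.1 _⟩⟩,
    fun i => ⟨fun j => c.1 (Sum.inr (i, j)), c.2.2.2 i⟩⟩
  invFun p := ⟨fun x => match x with
      | Sum.inl false => p.1.1
      | Sum.inl true => p.2.1.1
      | Sum.inr (i, j) => (p.2.2 i).1 j,
    ⟨fun x => match x with
      | Sum.inl false => p.1.2
      | Sum.inl true => Finset.mem_of_mem_erase p.2.1.2
      | Sum.inr (i, j) => (mem_pageSet.1 (p.2.2 i).2).1 j,
     Ne.symm (Finset.mem_erase.1 p.2.1.2).1,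
     fun i => (p.2.2 i).2⟩⟩
  left_inv c := Subtype.ext (funext fun x => match x with
    | Sum.inl false => rfl
    | Sum.inl true => rfl
    | Sum.inr (i, j) => rfl)
  right_inv p := rfl

lemma count_eq (k t n' : ℕ) :
    Nat.card {c : BookVertex (t+3) (n'+1) → ℤ //
        (∀ x, c x ≠ 0 ∧ |c x| ≤ (k : ℤ)) ∧
        ∀ x y, bookAdj (t+3) (n'+1) x y → c x ≠ sigmaL (t+3) (n'+1) 1 x y * c y}
      = ∑ a ∈ colS k, ∑ b ∈ (colS k).erase a,
          ∏ i : Fin (n'+1), (pageSet k t (if i.val = 0 then -a else a) b).card := by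
  rw [Nat.card_congr ((Equiv.subtypeEquivRight (cond_iff k t n')).trans (bookEquiv k t n'))]
  rw [Nat.card_eq_fintype_card, Fintype.card_sigma]
  rw [← Finset.sum_coe_sort (colS k)]
  refine Finset.sum_congr rfl fun a _ => ?_
  rw [Fintype.card_sigma, ← Finset.sum_coe_sort ((colS k).erase a.1)]
  refine Finset.sum_congr rfl fun b _ => ?_
  rw [Fintype.card_pi]
  exact Finset.prod_congr rfl fun i _ => Fintype.card_coe _

lemma final_sum (k t n' : ℕ) (hk : 1 ≤ k) :
    ((∑ a ∈ colS k, ∑ b ∈ (colS k).erase a,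
        ∏ i : Fin (n'+1), (pageSet k t (if i.val = 0 then -a else a) b).card : ℕ) : ℤ)
      = 2*(k:ℤ) * Gp (t+1) (2*(k:ℤ)) ^ n' * Gp (t+2) (2*(k:ℤ)) := by
  push_cast
  set G : ℤ := Gp (t+1) (2*(k:ℤ)) with hG
  have hinner : ∀ a ∈ colS k,
      (∑ b ∈ (colS k).erase a,
        ∏ i : Fin (n'+1), ((pageSet k t (if i.val = 0 then -a else a) b).card : ℤ))
      = G ^ n' * Gp (t+2) (2*(k:ℤ)) := by
    intro a ha
    have ha0 : a ≠ 0 := (mem_colS.1 ha).1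
    have hprod : ∀ b ∈ (colS k).erase a,
        (∏ i : Fin (n'+1), ((pageSet k t (if i.val = 0 then -a else a) b).card : ℤ))
        = G * G ^ n' + ((-1:ℤ)^t * G ^ n') * (if -a = b then 1 else 0) := by
      intro b hb
      have hbS : b ∈ colS k := Finset.mem_of_mem_erase hb
      have hba : b ≠ a := (Finset.mem_erase.1 hb).1
      rw [Fin.prod_univ_succ]
      have e0 : (if ((0 : Fin (n'+1)) : ℕ) = 0 then -a else a) = -a := if_pos rfl
      rw [e0, card_pageSet k hk t (-a) b (neg_mem_colS ha) hbS]
      rw [Finset.prod_congr rfl (fun i _ => ?_), Finset.prod_const, Finset.card_univ,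
          Fintype.card_fin]
      · ring
      · rw [if_neg (by simp [Fin.val_succ]), card_pageSet k hk t a b ha hbS,
          if_neg (fun h => hba h.symm), mul_zero, add_zero]
    rw [Finset.sum_congr rfl hprod]
    have hna : -a ∈ (colS k).erase a := Finset.mem_erase.2 ⟨by omega, neg_mem_colS ha⟩
    rw [Finset.sum_add_distrib, Finset.sum_const, Finset.card_erase_of_mem ha, card_colS,
      ← Finset.mul_sum, Finset.sum_ite_eq, if_pos hna, mul_one, nsmul_eq_mul]
    have hcast : ((2*k-1 : ℕ) : ℤ) = 2*(k:ℤ)-1 := by omega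
    have hmul := Gp_mul (t+1) (2*(k:ℤ))
    rw [show t+1+1 = t+2 from rfl] at hmul
    have hsign : (-1:ℤ)^(t+1) = -(-1)^t := by rw [pow_succ]; ring
    rw [← hG] at hmul
    rw [hcast]
    linear_combination (G ^ n') * hmul + (G ^ n') * hsign
  rw [Finset.sum_congr rfl hinner, Finset.sum_const, card_colS, nsmul_eq_mul]
  push_cast
  ring

/-- With `λ = 2k`, the number of zero-free proper colorings of `(B(m,n), σ_1)` with
color set `{-k, …, -1, 1, …, k}` is `λ·γ_m(λ)^{n-1}·γ_{m+1}(λ)`. -/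
theorem statement15 (m n : ℕ) (hm : 3 ≤ m) (hn : 1 ≤ n) (k : ℕ) (hk : 1 ≤ k) :
    (Nat.card {c : BookVertex m n → ℤ //
        (∀ x, c x ≠ 0 ∧ |c x| ≤ (k : ℤ)) ∧
        ∀ x y, bookAdj m n x y → c x ≠ sigmaL m n 1 x y * c y} : ℤ) =
      (2 * (k : ℤ)) * gammaP m (2 * (k : ℤ)) ^ (n - 1) * gammaP (m + 1) (2 * (k : ℤ)) := by
  obtain ⟨t, rfl⟩ : ∃ t, m = t + 3 := ⟨m - 3, by omega⟩
  obtain ⟨n', rfl⟩ : ∃ n', n = n' + 1 := ⟨n - 1, by omega⟩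
  rw [count_eq k t n', final_sum k t n' hk,
    gammaP_eq_Gp (t+3) (by omega), gammaP_eq_Gp (t+3+1) (by omega),
    show t+3-2 = t+1 from rfl, show t+3+1-2 = t+2 from rfl,
    show n'+1-1 = n' from rfl]
end

section
/- Let m ≥ 3, n ≥ 3, 2 ≤ l ≤ n−1 and k ≥ 1, and write λ = 2k. The number of proper colorings of the signed book graph (B(m,n), σ_l) with color set {−k,…,−1,1,…,k} equals γ_m(λ)^{n−l} times the number of proper colorings of B^{uv}(m,l) with color set {−k,…,−1,1,…,k}. -/
set_option maxHeartbeats 1600000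


namespace Book17

noncomputable def S (k : ℕ) : Finset ℤ := (Finset.Icc (-(k:ℤ)) k).erase 0

lemma mem_S {k : ℕ} {x : ℤ} : x ∈ S k ↔ x ≠ 0 ∧ |x| ≤ (k:ℤ) := by
  simp [S, Finset.mem_Icc, abs_le, and_comm]

lemma card_S (k : ℕ) : (S k).card = 2 * k := by
  have h0 : (0:ℤ) ∈ Finset.Icc (-(k:ℤ)) k := by
    simp [Finset.mem_Icc]
  rw [S, Finset.card_erase_of_mem h0, Int.card_Icc]
  omega

def pOK (k t : ℕ) (a b : ℤ) (f : Fin t → ℤ) : Prop :=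
  (∀ j, f j ≠ 0 ∧ |f j| ≤ (k:ℤ)) ∧
  (∀ j : Fin t, (j:ℕ) = 0 → f j ≠ a) ∧
  (∀ j : Fin t, (j:ℕ) = t - 1 → f j ≠ b) ∧
  (∀ j j' : Fin t, (j:ℕ) + 1 = (j':ℕ) → f j ≠ f j')

instance pathFinite (k t : ℕ) (a b : ℤ) : Finite {f : Fin t → ℤ // pOK k t a b f} := by
  apply Finite.of_injective
    (fun F => (fun j => (⟨F.1 j, mem_S.2 (F.2.1 j)⟩ : {x // x ∈ S k})))
  intro F G h
  ext j
  exact congrArg Subtype.val (congrFun h j)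

noncomputable def pathCard (k t : ℕ) (a b : ℤ) : ℕ := Nat.card {f : Fin t → ℤ // pOK k t a b f}

lemma nat_card_sigma {ι : Type*} [Fintype ι] (G : ι → Type*) [∀ i, Finite (G i)] :
    Nat.card (Σ i, G i) = ∑ i, Nat.card (G i) := by
  letI := fun i => Fintype.ofFinite (G i)
  simp [Nat.card_eq_fintype_card]

lemma pathCard_one (k : ℕ) (a b : ℤ) :
    pathCard k 1 a b = (((S k).erase b).erase a).card := by
  rw [pathCard, ← Nat.card_eq_finsetCard]
  apply Nat.card_congr
  refine ⟨fun F => ⟨F.1 0, ?_⟩, fun x => ⟨fun _ => x.1, ?_, ?_, ?_, ?_⟩, fun F => Subtype.ext (funext fun j => (congrArg F.1 (Fin.fin_one_eq_zero j)).symm), fun x => rfl⟩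
  · obtain ⟨h1, h2, h3, _⟩ := F.2
    simp only [Finset.mem_erase]
    exact ⟨h2 0 rfl, h3 0 rfl, mem_S.2 (h1 0)⟩
  · intro j
    have := x.2
    simp only [Finset.mem_erase] at this
    exact mem_S.1 this.2.2
  · intro j _
    have := x.2
    simp only [Finset.mem_erase] at this
    exact this.1
  · intro j _
    have := x.2
    simp only [Finset.mem_erase] at this
    exact this.2.1
  · intro j j' h
    have : (j':ℕ) < 1 := j'.2
    omega

lemma pathCard_succ (k t : ℕ) (ht : 1 ≤ t) (a b : ℤ) :
    pathCard k (t+1) a b = ∑ x ∈ (S k).erase b, pathCard k t a x := by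
  rw [pathCard]
  have e : {f : Fin (t+1) → ℤ // pOK k (t+1) a b f} ≃
      Σ x : ((S k).erase b : Finset ℤ), {f : Fin t → ℤ // pOK k t a x.1 f} := by
    refine ⟨fun F => ⟨⟨F.1 (Fin.last t), ?_⟩, ⟨Fin.init F.1, ?_⟩⟩,
            fun X => ⟨Fin.snoc X.2.1 X.1.1, ?_⟩, fun F => ?_, fun X => ?_⟩
    · obtain ⟨h1, h2, h3, h4⟩ := F.2
      simp only [Finset.mem_erase]
      refine ⟨h3 (Fin.last t) (by simp), mem_S.2 (h1 _)⟩
    · obtain ⟨h1, h2, h3, h4⟩ := F.2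
      refine ⟨fun j => h1 _, fun j hj => h2 _ (by simpa using hj), fun j hj => ?_,
        fun j j' hjj => h4 _ _ (by simpa using hjj)⟩
      exact h4 (Fin.castSucc j) (Fin.last t)
        (by simp only [Fin.coe_castSucc, Fin.val_last]; omega)
    · obtain ⟨⟨x, hx⟩, ⟨f', h1, h2, h3, h4⟩⟩ := X
      simp only [Finset.mem_erase] at hx
      refine ⟨fun j => ?_, fun j hj => ?_, fun j hj => ?_, fun j j' hjj => ?_⟩
      · cases j using Fin.lastCases with
        | last => rw [Fin.snoc_last]; exact mem_S.1 hx.2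
        | cast j => rw [Fin.snoc_castSucc]; exact h1 _
      · cases j using Fin.lastCases with
        | last =>
          simp only [Fin.val_last] at hj; omega
        | cast j => rw [Fin.snoc_castSucc]; exact h2 _ (by simpa using hj)
      · cases j using Fin.lastCases with
        | last => rw [Fin.snoc_last]; exact hx.1
        | cast j =>
          simp only [Fin.coe_castSucc] at hj
          have : (j:ℕ) < t := j.2
          omega
      · cases j' using Fin.lastCases with
        | last =>
          cases j using Fin.lastCases with
          | last =>
            simp only [Fin.val_last] at hjj; omega
          | cast j =>
            rw [Fin.snoc_castSucc, Fin.snoc_last]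
            refine h3 j ?_
            simp only [Fin.coe_castSucc, Fin.val_last] at hjj
            omega
        | cast j' =>
          cases j using Fin.lastCases with
          | last =>
            simp only [Fin.coe_castSucc, Fin.val_last] at hjj
            have : (j':ℕ) < t := j'.2
            omega
          | cast j =>
            rw [Fin.snoc_castSucc, Fin.snoc_castSucc]
            exact h4 _ _ (by simpa using hjj)
    · exact Subtype.ext (Fin.snoc_init_self F.1)
    · obtain ⟨⟨x, hx⟩, ⟨f', hf'⟩⟩ := X
      refine Sigma.subtype_ext (Subtype.ext ?_) ?_ <;> simp
  rw [Nat.card_congr e, nat_card_sigma,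
    ← Finset.sum_coe_sort ((S k).erase b) (fun x => pathCard k t a x)]
  rfl

lemma gammaP_succ' (m : ℕ) (hm : 1 ≤ m) (x : ℤ) :
    gammaP (m+1) x = (x - 1) * gammaP m x + (-1) ^ (m - 1) := by
  unfold gammaP
  have h1 : (m+1) - 1 = (m - 1) + 1 := by omega
  rw [h1, Finset.sum_range_succ, Finset.mul_sum]
  congr 1
  · apply Finset.sum_congr rfl
    intro i hi
    rw [Finset.mem_range] at hi
    have h2 : (m+1) - 2 - i = (m - 2 - i) + 1 := by omega
    rw [h2, pow_succ]
    ring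
  · have : (m+1) - 2 - (m - 1) = 0 := by omega
    rw [this, pow_zero, mul_one]

lemma gammaP_three (x : ℤ) : gammaP 3 x = x - 2 := by
  simp [gammaP, Finset.sum_range_succ]; ring

lemma pathCard_eq (k : ℕ) (hk : 1 ≤ k) (t : ℕ) (ht : 1 ≤ t) :
    ∀ a b : ℤ, a ∈ S k → b ∈ S k →
    (pathCard k t a b : ℤ) = gammaP (t+2) (2*(k:ℤ)) +
      (if a = b then (-1:ℤ)^(t+1) else 0) := by
  induction t, ht using Nat.le_induction with
  | base =>
    intro a b ha hb
    rw [pathCard_one, gammaP_three]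
    by_cases hab : a = b
    · subst hab
      rw [Finset.erase_idem, Finset.card_erase_of_mem ha, card_S]
      push_cast [Nat.cast_sub (by omega : 1 ≤ 2*k)]
      norm_num
      ring
    · rw [Finset.card_erase_of_mem (Finset.mem_erase.2 ⟨hab, ha⟩),
        Finset.card_erase_of_mem hb, card_S]
      simp only [hab, if_false]
      push_cast [Nat.cast_sub (by omega : 1 ≤ 2*k - 1), Nat.cast_sub (by omega : 1 ≤ 2*k)]
      ring
  | succ t ht IH =>
    intro a b ha hb
    rw [pathCard_succ k t ht a b]
    push_cast
    rw [Finset.sum_congr rfl (fun x hx => IH a x ha (Finset.mem_of_mem_erase hx)),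
      Finset.sum_add_distrib, Finset.sum_const, Finset.sum_ite_eq,
      Finset.card_erase_of_mem hb, card_S,
      show t+1+2 = (t+2)+1 from rfl, gammaP_succ' (t+2) (by omega)]
    have hsub : ((2*k - 1 : ℕ) : ℤ) = 2*(k:ℤ) - 1 := by
      push_cast [Nat.cast_sub (by omega : 1 ≤ 2*k)]; ring
    rw [nsmul_eq_mul, hsub]
    have hone : ((t+2) - 1) = t+1 := by omega
    rw [hone]
    by_cases hab : a = b
    · subst hab
      rw [if_pos rfl, if_neg (by simp [Finset.mem_erase])]
      rw [pow_succ (-1 : ℤ) (t+1)]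
      ring
    · rw [if_neg hab, if_pos (Finset.mem_erase.2 ⟨hab, ha⟩)]
      ring

lemma finite_aux {V : Type*} [Finite V] (k : ℕ) (Q : (V → ℤ) → Prop) :
    Finite {c : V → ℤ // (∀ x, c x ≠ 0 ∧ |c x| ≤ (k:ℤ)) ∧ Q c} := by
  apply Finite.of_injective
    (fun F => (fun x => (⟨F.1 x, mem_S.2 (F.2.1 x)⟩ : {y // y ∈ S k})))
  intro F G h
  ext x
  exact congrArg Subtype.val (congrFun h x)

variable {m n l : ℕ}

def fwd (l : ℕ) (hln : l ≤ n) (c : BookVertex m n → ℤ) : BookVertex m l → ℤ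
  | Sum.inl false => -c (Sum.inl false)
  | Sum.inl true => c (Sum.inl true)
  | Sum.inr (i, j) => c (Sum.inr (Fin.castLE hln i, j))

def fwdP (l : ℕ) (c : BookVertex m n → ℤ) (i : Fin (n - l)) (j : Fin (m - 2)) : ℤ :=
  c (Sum.inr (⟨l + i.1, by have := i.2; omega⟩, j))

lemma congr_fin {α : Type*} {N : ℕ} (g : Fin N → α) {i i' : Fin N}
    (h : (i:ℕ) = (i':ℕ)) : g i = g i' := congrArg g (Fin.ext h)

def bwd (c' : BookVertex m l → ℤ) (F : Fin (n - l) → Fin (m - 2) → ℤ) :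
    BookVertex m n → ℤ
  | Sum.inl false => -c' (Sum.inl false)
  | Sum.inl true => c' (Sum.inl true)
  | Sum.inr (i, j) =>
      if h : i.1 < l then c' (Sum.inr (⟨i.1, h⟩, j))
      else F ⟨i.1 - l, by have := i.2; omega⟩ j

end Book17


open Book17 in
/-- With `λ = 2k`, the number of zero-free proper colorings of `(B(m,n), σ_l)` with
color set `{-k, …, -1, 1, …, k}` equals `γ_m(λ)^{n-l}` times the number of zero-free
proper colorings of `B^{uv}(m,l)` with that color set. -/
theorem statement17 (m n l : ℕ) (hm : 3 ≤ m) (hn : 3 ≤ n) (hl : 2 ≤ l) (hln : l ≤ n - 1)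
    (k : ℕ) (hk : 1 ≤ k) :
    (Nat.card {c : BookVertex m n → ℤ //
        (∀ x, c x ≠ 0 ∧ |c x| ≤ (k : ℤ)) ∧
        ∀ x y, bookAdj m n x y → c x ≠ sigmaL m n l x y * c y} : ℤ) =
      gammaP m (2 * (k : ℤ)) ^ (n - l) *
        (Nat.card {c : BookVertex m l → ℤ //
          (∀ x, c x ≠ 0 ∧ |c x| ≤ (k : ℤ)) ∧
          ∀ x y, bookAdj m l x y → c x ≠ sigmaUV m l x y * c y} : ℤ) := by
  classical
  have hm2 : 1 ≤ m - 2 := by omega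
  have hln' : l ≤ n := by omega
  have e : {c : BookVertex m n → ℤ //
        (∀ x, c x ≠ 0 ∧ |c x| ≤ (k : ℤ)) ∧
        ∀ x y, bookAdj m n x y → c x ≠ sigmaL m n l x y * c y} ≃
      Σ c' : {c : BookVertex m l → ℤ //
          (∀ x, c x ≠ 0 ∧ |c x| ≤ (k : ℤ)) ∧
          ∀ x y, bookAdj m l x y → c x ≠ sigmaUV m l x y * c y},
        {F : Fin (n-l) → Fin (m-2) → ℤ //
          ∀ i, pOK k (m-2) (-(c'.1 (Sum.inl false))) (c'.1 (Sum.inl true)) (F i)} := by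
    refine ⟨fun c => ⟨⟨fwd l hln' c.1, ?_, ?_⟩, ⟨fwdP l c.1, ?_⟩⟩,
      fun X => ⟨bwd X.1.1 X.2.1, ?_, ?_⟩, ?_, ?_⟩
    · -- fwd values in S
      obtain ⟨c, hS, hP⟩ := c
      rintro ((_|_) | ⟨i, j⟩)
      · simpa [fwd, abs_neg] using hS (Sum.inl false)
      · simpa [fwd] using hS (Sum.inl true)
      · simpa [fwd] using hS _
    · -- fwd proper for sigmaUV
      obtain ⟨c, hS, hP⟩ := c
      rintro ((_|_) | ⟨i, j⟩) ((_|_) | ⟨i', j'⟩) hadj <;>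
        simp only [bookAdj] at hadj <;> simp only [fwd, sigmaUV]
      · exact absurd rfl hadj
      · have h1 := hP (Sum.inl false) (Sum.inl true) (by simp [bookAdj])
        simp only [sigmaL] at h1
        intro h; apply h1; linarith
      · -- u, page vertex
        have h1 := hP (Sum.inl false) (Sum.inr (Fin.castLE hln' i', j'))
          (by simp [bookAdj, hadj])
        simp only [sigmaL] at h1
        rw [if_pos ⟨hadj, by simpa using i'.2⟩] at h1
        intro h; apply h1; linarith
      · have h1 := hP (Sum.inl true) (Sum.inl false) (by simp [bookAdj])
        simp only [sigmaL] at h1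
        intro h; apply h1; linarith
      · exact absurd rfl hadj
      · have h1 := hP (Sum.inl true) (Sum.inr (Fin.castLE hln' i', j'))
          (by simp [bookAdj, hadj])
        simp only [sigmaL] at h1
        simpa using h1
      · have h1 := hP (Sum.inr (Fin.castLE hln' i, j)) (Sum.inl false)
          (by simp [bookAdj, hadj])
        simp only [sigmaL] at h1
        rw [if_pos ⟨hadj, by simpa using i.2⟩] at h1
        intro h; apply h1; linarith
      · have h1 := hP (Sum.inr (Fin.castLE hln' i, j)) (Sum.inl true)
          (by simp [bookAdj, hadj])
        simp only [sigmaL] at h1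
        simpa using h1
      · obtain ⟨hii, hjj⟩ := hadj
        have h1 := hP (Sum.inr (Fin.castLE hln' i, j)) (Sum.inr (Fin.castLE hln' i', j'))
          (by exact ⟨congrArg (Fin.castLE hln') hii, hjj⟩)
        simp only [sigmaL] at h1
        simpa using h1
    · -- pages pOK
      obtain ⟨c, hS, hP⟩ := c
      intro i
      refine ⟨fun j => hS _, fun j hj => ?_, fun j hj => ?_, fun j j' hjj => ?_⟩
      · have h1 := hP (Sum.inr (⟨l + i.1, by have := i.2; omega⟩, j)) (Sum.inl false)
          (by simp [bookAdj, hj])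
        simp only [sigmaL] at h1
        rw [if_neg (show ¬((j:ℕ) = 0 ∧ l + (i:ℕ) < l) by omega)] at h1
        simp only [fwd, fwdP, neg_neg]
        intro h; apply h1; linarith
      · have h1 := hP (Sum.inr (⟨l + i.1, by have := i.2; omega⟩, j)) (Sum.inl true)
          (by simp only [bookAdj]; omega)
        simp only [sigmaL] at h1
        simp only [fwd, fwdP]
        intro h; apply h1; linarith
      · have h1 := hP (Sum.inr (⟨l + i.1, by have := i.2; omega⟩, j))
          (Sum.inr (⟨l + i.1, by have := i.2; omega⟩, j'))
          (by exact ⟨rfl, Or.inl hjj⟩)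
        simp only [sigmaL] at h1
        simp only [fwdP]
        intro h; apply h1; linarith
    · -- bwd values in S
      obtain ⟨⟨c', hS', hP'⟩, F, hF⟩ := X
      rintro ((_|_) | ⟨i, j⟩)
      · simpa [bwd, abs_neg] using hS' (Sum.inl false)
      · simpa [bwd] using hS' (Sum.inl true)
      · simp only [bwd]
        by_cases h : (i.1 : ℕ) < l
        · rw [dif_pos h]; exact hS' _
        · rw [dif_neg h]; exact (hF _).1 j
    · -- bwd proper for sigmaL
      obtain ⟨⟨c', hS', hP'⟩, F, hF⟩ := X
      rintro ((_|_) | ⟨i, j⟩) ((_|_) | ⟨i', j'⟩) hadj <;>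
        simp only [bookAdj] at hadj <;> simp only [bwd, sigmaL]
      · exact absurd rfl hadj
      · have h1 := hP' (Sum.inl false) (Sum.inl true) (by simp [bookAdj])
        simp only [sigmaUV] at h1
        intro h; apply h1; linarith
      · -- u, page vertex, hadj : j'.1 = 0
        by_cases h : (i'.1 : ℕ) < l
        · rw [if_pos ⟨hadj, h⟩, dif_pos h]
          have h1 := hP' (Sum.inl false) (Sum.inr (⟨i'.1, h⟩, j')) (by simp [bookAdj, hadj])
          simp only [sigmaUV] at h1
          intro hq; apply h1; linarith
        · rw [if_neg (by tauto), dif_neg h]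
          have h1 := (hF ⟨i'.1 - l, by have := i'.2; omega⟩).2.1 j' hadj
          intro hq; apply h1; linarith
      · have h1 := hP' (Sum.inl true) (Sum.inl false) (by simp [bookAdj])
        simp only [sigmaUV] at h1
        intro h; apply h1; linarith
      · exact absurd rfl hadj
      · by_cases h : (i'.1 : ℕ) < l
        · rw [dif_pos h]
          have h1 := hP' (Sum.inl true) (Sum.inr (⟨i'.1, h⟩, j')) (by simp [bookAdj, hadj])
          simp only [sigmaUV] at h1
          simpa using h1
        · rw [dif_neg h]
          have h1 := (hF ⟨i'.1 - l, by have := i'.2; omega⟩).2.2.1 j' (by omega)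
          intro hq; apply h1; linarith
      · by_cases h : (i.1 : ℕ) < l
        · rw [if_pos ⟨hadj, h⟩, dif_pos h]
          have h1 := hP' (Sum.inr (⟨i.1, h⟩, j)) (Sum.inl false) (by simp [bookAdj, hadj])
          simp only [sigmaUV] at h1
          intro hq; apply h1; linarith
        · rw [if_neg (by tauto), dif_neg h]
          have h1 := (hF ⟨i.1 - l, by have := i.2; omega⟩).2.1 j hadj
          intro hq; apply h1; linarith
      · by_cases h : (i.1 : ℕ) < l
        · rw [dif_pos h]
          have h1 := hP' (Sum.inr (⟨i.1, h⟩, j)) (Sum.inl true) (by simp [bookAdj, hadj])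
          simp only [sigmaUV] at h1
          simpa using h1
        · rw [dif_neg h]
          have h1 := (hF ⟨i.1 - l, by have := i.2; omega⟩).2.2.1 j (by omega)
          intro hq; apply h1; linarith
      · obtain ⟨hii, hjj⟩ := hadj
        have hiv : i'.1 = i.1 := (Fin.ext_iff.1 hii).symm
        by_cases h : (i.1 : ℕ) < l
        · rw [dif_pos h, dif_pos (hiv ▸ h)]
          have h1 := hP' (Sum.inr (⟨i.1, h⟩, j)) (Sum.inr (⟨i'.1, hiv ▸ h⟩, j'))
            (by exact ⟨by simp [Fin.ext_iff, hiv], hjj⟩)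
          simp only [sigmaUV] at h1
          simpa using h1
        · rw [dif_neg h, dif_neg (by omega : ¬ (i'.1 : ℕ) < l)]
          have hidx : (⟨i'.1 - l, by have := i'.2; omega⟩ : Fin (n-l)) =
              ⟨i.1 - l, by have := i.2; omega⟩ := by
            simp [Fin.ext_iff, hiv]
          rw [hidx, one_mul]
          rcases hjj with hjj | hjj
          · exact (hF ⟨i.1 - l, by have := i.2; omega⟩).2.2.2 j j' hjj
          · exact ((hF ⟨i.1 - l, by have := i.2; omega⟩).2.2.2 j' j hjj).symm
    · -- left inverse
      rintro ⟨c, hc⟩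
      apply Subtype.ext
      funext x
      show bwd (fwd l hln' c) (fwdP l c) x = c x
      rcases x with ((_|_) | ⟨i, j⟩)
      · simp [bwd, fwd]
      · simp [bwd, fwd]
      · simp only [bwd]
        by_cases h : (i.1 : ℕ) < l
        · rw [dif_pos h]
          simp only [fwd]
          exact congr_fin (fun q => c (Sum.inr (q, j))) rfl
        · rw [dif_neg h]
          simp only [fwdP]
          exact congr_fin (fun q => c (Sum.inr (q, j)))
            (by show l + ((i:ℕ) - l) = (i:ℕ); omega)
    · -- right inverse
      rintro ⟨⟨c', hc'⟩, F, hF⟩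
      refine Sigma.subtype_ext (Subtype.ext ?_) ?_
      · funext x
        show fwd l hln' (bwd c' F) x = c' x
        rcases x with ((_|_) | ⟨i, j⟩)
        · simp [bwd, fwd]
        · simp [bwd, fwd]
        · simp only [fwd, bwd]
          have h : ((Fin.castLE hln' i).1 : ℕ) < l := i.2
          rw [dif_pos h]
          exact congr_fin (fun q => c' (Sum.inr (q, j))) rfl
      · show fwdP l (bwd c' F) = F
        funext i j
        simp only [fwdP, bwd]
        have h : ¬ (l + i.1 : ℕ) < l := by omega
        rw [dif_neg h]
        exact congr_fin (fun q => F q j) (by show l + (i:ℕ) - l = (i:ℕ); omega)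
  rw [Nat.card_congr e]
  haveI fR : Finite {c : BookVertex m l → ℤ //
      (∀ x, c x ≠ 0 ∧ |c x| ≤ (k : ℤ)) ∧
      ∀ x y, bookAdj m l x y → c x ≠ sigmaUV m l x y * c y} := finite_aux k _
  haveI fFib : ∀ c' : {c : BookVertex m l → ℤ //
      (∀ x, c x ≠ 0 ∧ |c x| ≤ (k : ℤ)) ∧
      ∀ x y, bookAdj m l x y → c x ≠ sigmaUV m l x y * c y},
      Finite {F : Fin (n-l) → Fin (m-2) → ℤ //
        ∀ i, pOK k (m-2) (-(c'.1 (Sum.inl false))) (c'.1 (Sum.inl true)) (F i)} := by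
    intro c'
    apply Finite.of_injective (fun F =>
      (fun i j => (⟨F.1 i j, mem_S.2 ((F.2 i).1 j)⟩ : {y // y ∈ S k})))
    intro F G h
    ext i j
    exact congrArg Subtype.val (congrFun (congrFun h i) j)
  letI := Fintype.ofFinite {c : BookVertex m l → ℤ //
      (∀ x, c x ≠ 0 ∧ |c x| ≤ (k : ℤ)) ∧
      ∀ x y, bookAdj m l x y → c x ≠ sigmaUV m l x y * c y}
  rw [nat_card_sigma]
  push_cast
  have hfib : ∀ c' : {c : BookVertex m l → ℤ //
      (∀ x, c x ≠ 0 ∧ |c x| ≤ (k : ℤ)) ∧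
      ∀ x y, bookAdj m l x y → c x ≠ sigmaUV m l x y * c y},
      (Nat.card {F : Fin (n-l) → Fin (m-2) → ℤ //
        ∀ i, pOK k (m-2) (-(c'.1 (Sum.inl false))) (c'.1 (Sum.inl true)) (F i)} : ℤ) =
      gammaP m (2 * (k:ℤ)) ^ (n - l) := by
    rintro ⟨c', hS', hP'⟩
    have ha : -(c' (Sum.inl false)) ∈ S k := by
      rw [mem_S]
      simpa [abs_neg] using hS' (Sum.inl false)
    have hb : c' (Sum.inl true) ∈ S k := mem_S.2 (hS' _)
    have hab : -(c' (Sum.inl false)) ≠ c' (Sum.inl true) := by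
      have h1 := hP' (Sum.inl false) (Sum.inl true) (by simp [bookAdj])
      simp only [sigmaUV] at h1
      intro h; apply h1; linarith
    rw [Nat.card_congr (Equiv.subtypePiEquivPi
      (p := fun (_ : Fin (n-l)) (f : Fin (m-2) → ℤ) =>
        pOK k (m-2) (-(c' (Sum.inl false))) (c' (Sum.inl true)) f)),
      Nat.card_pi, Finset.prod_const, Finset.card_univ, Fintype.card_fin]
    push_cast
    rw [show Nat.card {f : Fin (m-2) → ℤ //
        pOK k (m-2) (-(c' (Sum.inl false))) (c' (Sum.inl true)) f} =
      pathCard k (m-2) (-(c' (Sum.inl false))) (c' (Sum.inl true)) from rfl]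
    rw [pathCard_eq k hk (m-2) hm2 _ _ ha hb, if_neg hab, add_zero,
      show (m-2)+2 = m by omega]
  rw [Finset.sum_congr rfl (fun c' _ => hfib c'), Finset.sum_const, Finset.card_univ,
    nsmul_eq_mul, Nat.card_eq_fintype_card]
  ring
end
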